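/- Let S be a nice hole (a BLS-hole with no left notches), L(S) its unique leftmost edge and R(S) its unique rightmost edge. Traversing the lower boundary FB(S) (the anticlockwise path from L(S) to R(S)) edge by edge starting at L(S), the edges e are visited in non-decreasing order of x_min(e); the same holds for the upper boundary FT(S) (the clockwise path from L(S) to R(S)). -/

import Mathlib

open Set

/-- A clockwise-oriented simple rectilinear polygon with `n + 1` vertices,
listed in the order of a clockwise traversal of its boundary. -/
structure RectPolygon (n : ℕ) where
  v : Fin (n + 1) → ℝ × ℝ
  inj : Function.Injective v
  axis : ∀ i : Fin (n + 1), (v i).1 = (v (i + 1)).1 ∨ (v i).2 = (v (i + 1)).2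
  nondegen : ∀ i : Fin (n + 1), v i ≠ v (i + 1)
  alternate : ∀ i : Fin (n + 1), ((v i).1 = (v (i + 1)).1) ↔ ¬((v (i + 1)).1 = (v (i + 2)).1)
  simple : ∀ i j : Fin (n + 1), j ≠ i → j ≠ i + 1 → j + 1 ≠ i →
      Disjoint (segment ℝ (v i) (v (i + 1))) (segment ℝ (v j) (v (j + 1)))
  clockwise : (∑ i : Fin (n + 1), ((v i).1 * (v (i + 1)).2 - (v (i + 1)).1 * (v i).2)) < 0

/-- Clockwise distance from edge `s` to edge `i` (cyclically). -/
def cpos {m : ℕ} (s i : Fin m) : ℕ := ((i - s : Fin m) : ℕ)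

namespace RectPolygon

variable {n : ℕ} (P : RectPolygon n)

/-- The `i`-th boundary edge, from vertex `i` to vertex `i+1`. -/
def edge (i : Fin (n + 1)) : Set (ℝ × ℝ) := segment ℝ (P.v i) (P.v (i + 1))

/-- The boundary of the polygon: a closed rectilinear arc. -/
def boundary : Set (ℝ × ℝ) := ⋃ i, P.edge i

def Horiz (i : Fin (n + 1)) : Prop := (P.v i).2 = (P.v (i + 1)).2
def Vert (i : Fin (n + 1)) : Prop := (P.v i).1 = (P.v (i + 1)).1

/-- Clockwise-rightward edge. -/
def Rightward (i : Fin (n + 1)) : Prop := P.Horiz i ∧ (P.v i).1 < (P.v (i + 1)).1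
/-- Clockwise-leftward edge. -/
def Leftward (i : Fin (n + 1)) : Prop := P.Horiz i ∧ (P.v (i + 1)).1 < (P.v i).1
def Upward (i : Fin (n + 1)) : Prop := P.Vert i ∧ (P.v i).2 < (P.v (i + 1)).2
def Downward (i : Fin (n + 1)) : Prop := P.Vert i ∧ (P.v (i + 1)).2 < (P.v i).2

/-- A leftmost edge: a vertical edge whose two neighbouring horizontal edges lie to its
right and with the interior of the hole to its right (in clockwise convention: an upward
edge preceded by a leftward edge and followed by a rightward edge). -/
def LeftmostEdge (i : Fin (n + 1)) : Prop := P.Upward i ∧ P.Leftward (i - 1) ∧ P.Rightward (i + 1)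
/-- A right notch: a vertical edge whose two neighbouring horizontal edges lie to its right
but with the interior of the hole to its left. -/
def RightNotch (i : Fin (n + 1)) : Prop := P.Downward i ∧ P.Leftward (i - 1) ∧ P.Rightward (i + 1)
/-- A rightmost edge. -/
def RightmostEdge (i : Fin (n + 1)) : Prop := P.Downward i ∧ P.Rightward (i - 1) ∧ P.Leftward (i + 1)
/-- A left notch. -/
def LeftNotch (i : Fin (n + 1)) : Prop := P.Upward i ∧ P.Rightward (i - 1) ∧ P.Leftward (i + 1)
/-- A topmost edge. -/
def TopmostEdge (i : Fin (n + 1)) : Prop := P.Rightward i ∧ P.Upward (i - 1) ∧ P.Downward (i + 1)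
/-- A top notch. -/
def TopNotch (i : Fin (n + 1)) : Prop := P.Rightward i ∧ P.Downward (i - 1) ∧ P.Upward (i + 1)

/-- A falling corner at vertex `v (i + 1)`: preceding edge downward, succeeding edge rightward. -/
def FallingCornerAt (i : Fin (n + 1)) : Prop := P.Downward i ∧ P.Rightward (i + 1)

/-- A BLS-hole: no right notches, no top notches, and at most one falling corner. -/
def BLS : Prop := (∀ i, ¬ P.RightNotch i) ∧ (∀ i, ¬ P.TopNotch i) ∧
  (∀ i j, P.FallingCornerAt i → P.FallingCornerAt j → i = j)

/-- A nice hole: a BLS-hole without left notches. -/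
def Nice : Prop := P.BLS ∧ ∀ i, ¬ P.LeftNotch i

/-- The closed region bounded by the polygon: boundary plus inner (bounded) region. -/
def region : Set (ℝ × ℝ) :=
  P.boundary ∪ {p | p ∉ P.boundary ∧ Bornology.IsBounded (connectedComponentIn P.boundaryᶜ p)}


def xMinEdge (i : Fin (n + 1)) : ℝ := min (P.v i).1 (P.v (i + 1)).1

/-- Point on edge `i` at parameter `t ∈ [0,1]`. -/
def ptOn (i : Fin (n + 1)) (t : ℝ) : ℝ × ℝ := P.v i + t • (P.v (i + 1) - P.v i)

def yMax : ℝ := Finset.univ.sup' Finset.univ_nonempty fun i => (P.v i).2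
def yMin : ℝ := Finset.univ.inf' Finset.univ_nonempty fun i => (P.v i).2

/-- The lower boundary: edges strictly between the leftmost edge `l` and the rightmost
edge `r` in anticlockwise order. -/
def FBset (l r : Fin (n + 1)) : Set (ℝ × ℝ) :=
  ⋃ a ∈ {a : Fin (n + 1) | 1 ≤ cpos a l ∧ cpos a l < cpos r l}, P.edge a

/-- The upper boundary: edges strictly between `l` and `r` in clockwise order. -/
def FTset (l r : Fin (n + 1)) : Set (ℝ × ℝ) :=
  ⋃ a ∈ {a : Fin (n + 1) | 1 ≤ cpos l a ∧ cpos l a < cpos l r}, P.edge a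

/-- The upper vertices of the left notches. -/
def QPoints : Set (ℝ × ℝ) := {p | ∃ i, P.LeftNotch i ∧ p = P.v (i + 1)}

end RectPolygon


namespace NiceChain

lemma mem_seg_iff {p q z : ℝ × ℝ} :
    z ∈ segment ℝ p q ↔ ∃ t : ℝ, 0 ≤ t ∧ t ≤ 1 ∧
      z.1 = (1 - t) * p.1 + t * q.1 ∧ z.2 = (1 - t) * p.2 + t * q.2 := by
  rw [segment_eq_image]
  simp only [mem_image, mem_Icc]
  constructor
  · rintro ⟨t, ⟨h0, h1⟩, rfl⟩
    exact ⟨t, h0, h1, by simp, by simp⟩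
  · rintro ⟨t, h0, h1, hx, hy⟩
    refine ⟨t, ⟨h0, h1⟩, ?_⟩
    apply Prod.ext <;> simp [hx, hy]

lemma seg_x_mem {p q z : ℝ × ℝ} (h : z ∈ segment ℝ p q) :
    min p.1 q.1 ≤ z.1 ∧ z.1 ≤ max p.1 q.1 := by
  rw [mem_seg_iff] at h
  obtain ⟨t, h0, h1, hx, -⟩ := h
  constructor
  · rcases le_total p.1 q.1 with hpq | hpq <;> rw [hx] <;>
      [rw [min_eq_left hpq]; rw [min_eq_right hpq]] <;> nlinarith
  · rcases le_total p.1 q.1 with hpq | hpq <;> rw [hx] <;>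
      [rw [max_eq_right hpq]; rw [max_eq_left hpq]] <;> nlinarith

lemma seg_exists_y {p q : ℝ × ℝ} {x : ℝ} (h1 : p.1 ≤ x) (h2 : x ≤ q.1) :
    ∃ y, (x, y) ∈ segment ℝ p q := by
  rcases eq_or_lt_of_le (h1.trans h2) with he | hlt
  · refine ⟨p.2, ?_⟩
    have : x = p.1 := le_antisymm (by rw [he]; exact h2) h1
    rw [this]
    exact left_mem_segment _ _ _
  · have hne : q.1 - p.1 ≠ 0 := by linarith
    refine ⟨(1 - (x - p.1)/(q.1 - p.1)) * p.2 + (x - p.1)/(q.1 - p.1) * q.2, ?_⟩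
    rw [mem_seg_iff]
    refine ⟨(x - p.1)/(q.1 - p.1), div_nonneg (by linarith) (by linarith), ?_, ?_, rfl⟩
    · rw [div_le_one (by linarith)]; linarith
    · field_simp; ring

lemma horiz_seg_y {p q z : ℝ × ℝ} (h : p.2 = q.2) (hz : z ∈ segment ℝ p q) : z.2 = p.2 := by
  rw [mem_seg_iff] at hz
  obtain ⟨t, -, -, -, hy⟩ := hz
  rw [hy, ← h]; ring

lemma horiz_seg_mem {p q : ℝ × ℝ} {x : ℝ} (h : p.2 = q.2) (h1 : p.1 ≤ x) (h2 : x ≤ q.1) :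
    (x, p.2) ∈ segment ℝ p q := by
  obtain ⟨y, hy⟩ := seg_exists_y h1 h2
  have h2y := horiz_seg_y h hy
  rw [show ((x:ℝ), y).2 = y from rfl] at h2y
  rwa [← h2y]

lemma vert_seg_mem {p q : ℝ × ℝ} {y : ℝ} (h : p.1 = q.1) (h1 : min p.2 q.2 ≤ y)
    (h2 : y ≤ max p.2 q.2) : (p.1, y) ∈ segment ℝ p q := by
  rcases le_total p.2 q.2 with hpq | hpq
  · rw [min_eq_left hpq] at h1; rw [max_eq_right hpq] at h2
    rcases eq_or_lt_of_le (h1.trans h2) with he | hlt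
    · have : y = p.2 := le_antisymm (by rw [he]; exact h2) h1
      rw [this]; exact left_mem_segment _ _ _
    · have hne : q.2 - p.2 ≠ 0 := by linarith
      rw [mem_seg_iff]
      refine ⟨(y - p.2)/(q.2 - p.2), div_nonneg (by linarith) (by linarith), ?_,
        by simp [h]; ring, ?_⟩
      · rw [div_le_one (by linarith)]; linarith
      · field_simp; ring
  · rw [min_eq_right hpq] at h1; rw [max_eq_left hpq] at h2
    rw [segment_symm]
    rcases eq_or_lt_of_le (h1.trans h2) with he | hlt
    · have : y = q.2 := le_antisymm (by rw [he]; exact h2) h1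
      rw [this, h]; exact left_mem_segment _ _ _
    · have hne : p.2 - q.2 ≠ 0 := by linarith
      rw [mem_seg_iff]
      refine ⟨(y - q.2)/(p.2 - q.2), div_nonneg (by linarith) (by linarith), ?_,
        by simp [h]; ring, ?_⟩
      · rw [div_le_one (by linarith)]; linarith
      · field_simp; ring

def chainSet (f : ℕ → ℝ × ℝ) (k : ℕ) : Set (ℝ × ℝ) :=
  ⋃ j ∈ Finset.range k, segment ℝ (f j) (f (j + 1))

lemma mem_chainSet_iff {f : ℕ → ℝ × ℝ} {k : ℕ} {p : ℝ × ℝ} :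
    p ∈ chainSet f k ↔ ∃ j < k, p ∈ segment ℝ (f j) (f (j + 1)) := by
  simp [chainSet]

structure IsChain (f : ℕ → ℝ × ℝ) (k : ℕ) : Prop where
  axis : ∀ j < k, (f j).1 = (f (j + 1)).1 ∨ (f j).2 = (f (j + 1)).2
  mono : ∀ j < k, (f j).1 ≤ (f (j + 1)).1

lemma IsChain.x_le {f : ℕ → ℝ × ℝ} {k : ℕ} (h : IsChain f k) {i j : ℕ}
    (hij : i ≤ j) (hj : j ≤ k) : (f i).1 ≤ (f j).1 := by
  induction j with
  | zero => simp_all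
  | succ j ih =>
    rcases Nat.lt_or_ge i (j+1) with hl | hg
    · exact (ih (by omega) (by omega)).trans (h.mono j (by omega))
    · have : i = j + 1 := by omega
      simp [this]

lemma exists_span {f : ℕ → ℝ × ℝ} {k : ℕ} (h : IsChain f k) (hk : 1 ≤ k) {x : ℝ}
    (h1 : (f 0).1 ≤ x) (h2 : x ≤ (f k).1) :
    ∃ j < k, (f j).1 ≤ x ∧ x ≤ (f (j + 1)).1 := by
  induction k with
  | zero => omega
  | succ k ih =>
    rcases Nat.eq_zero_or_pos k with rfl | hk'
    · exact ⟨0, by omega, h1, h2⟩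
    · rcases le_total x (f k).1 with hx | hx
      · obtain ⟨j, hj, hj1, hj2⟩ := ih ⟨fun j hj => h.axis j (by omega),
          fun j hj => h.mono j (by omega)⟩ hk' hx
        exact ⟨j, by omega, hj1, hj2⟩
      · exact ⟨k, by omega, hx, h2⟩

lemma chain_slice_nonempty {f : ℕ → ℝ × ℝ} {k : ℕ} (h : IsChain f k) (hk : 1 ≤ k) {x : ℝ}
    (h1 : (f 0).1 ≤ x) (h2 : x ≤ (f k).1) : ∃ y, (x, y) ∈ chainSet f k := by
  obtain ⟨j, hj, hj1, hj2⟩ := exists_span h hk h1 h2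
  obtain ⟨y, hy⟩ := seg_exists_y hj1 hj2
  exact ⟨y, mem_chainSet_iff.2 ⟨j, hj, hy⟩⟩

lemma vertex_mem_chain {f : ℕ → ℝ × ℝ} {k : ℕ} (hk : 1 ≤ k) {j : ℕ} (hj : j ≤ k) :
    f j ∈ chainSet f k := by
  rcases Nat.lt_or_ge j k with h | h
  · exact mem_chainSet_iff.2 ⟨j, h, left_mem_segment _ _ _⟩
  · have hjk : j = k := by omega
    subst hjk
    refine mem_chainSet_iff.2 ⟨j - 1, by omega, ?_⟩
    rw [show j - 1 + 1 = j by omega]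
    exact right_mem_segment _ _ _

lemma between_split {a b m y : ℝ} (h1 : min a b ≤ y) (h2 : y ≤ max a b) :
    (min a m ≤ y ∧ y ≤ max a m) ∨ (min m b ≤ y ∧ y ≤ max m b) := by
  rcases le_total y m with hy | hy <;> rcases le_total a b with hab | hab <;>
    simp only [min_def, max_def] at * <;> split_ifs at * <;>
    first
      | (left; constructor <;> linarith)
      | (right; constructor <;> linarith)

lemma chain_slice_convex_aux {f : ℕ → ℝ × ℝ} {k : ℕ} (h : IsChain f k) :
    ∀ (d j1 j2 : ℕ), j2 - j1 = d → j1 ≤ j2 → j2 < k → ∀ {x a b y : ℝ},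
      (x, a) ∈ segment ℝ (f j1) (f (j1 + 1)) → (x, b) ∈ segment ℝ (f j2) (f (j2 + 1)) →
      min a b ≤ y → y ≤ max a b → (x, y) ∈ chainSet f k := by
  intro d
  induction d with
  | zero =>
    intro j1 j2 hd hle hk2 x a b y ha hb hmin hmax
    have : j1 = j2 := by omega
    subst this
    refine mem_chainSet_iff.2 ⟨j1, hk2, ?_⟩
    exact (convex_segment (f j1) (f (j1+1))).segment_subset ha hb
      (vert_seg_mem rfl hmin hmax)
  | succ d ih =>
    intro j1 j2 hd hle hk2 x a b y ha hb hmin hmax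
    have hj12 : j1 < j2 := by omega
    -- x equals (f (j1+1)).1
    have hxa := seg_x_mem ha
    have hxb := seg_x_mem hb
    have hx1 : x ≤ (f (j1+1)).1 := by
      have := hxa.2
      have hm := h.mono j1 (by omega)
      rw [max_eq_right hm] at this; exact this
    have hx2 : (f (j1+1)).1 ≤ x := by
      have := hxb.1
      have hm := h.mono j2 hk2
      rw [min_eq_left hm] at this
      exact (h.x_le (by omega : j1 + 1 ≤ j2) (by omega)).trans this
    have hxe : (f (j1+1)).1 = x := le_antisymm hx2 hx1
    set m := (f (j1+1)).2 with hm
    have hPm : ((x:ℝ), m) = f (j1+1) := by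
      apply Prod.ext <;> simp [hxe, hm]
    rcases between_split (m := m) hmin hmax with ⟨h1, h2⟩ | ⟨h1, h2⟩
    · -- within segment j1
      have hma : ((x:ℝ), m) ∈ segment ℝ (f j1) (f (j1+1)) := by
        rw [hPm]; exact right_mem_segment _ _ _
      refine mem_chainSet_iff.2 ⟨j1, by omega, ?_⟩
      exact (convex_segment (f j1) (f (j1+1))).segment_subset ha hma
        (vert_seg_mem rfl h1 h2)
    · have hma : ((x:ℝ), m) ∈ segment ℝ (f (j1+1)) (f (j1+2)) := by
        rw [hPm]; exact left_mem_segment _ _ _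
      exact ih (j1+1) j2 (by omega) (by omega) hk2 hma hb h1 h2

lemma chain_slice_convex {f : ℕ → ℝ × ℝ} {k : ℕ} (h : IsChain f k) {x a b y : ℝ}
    (ha : (x, a) ∈ chainSet f k) (hb : (x, b) ∈ chainSet f k)
    (hmin : min a b ≤ y) (hmax : y ≤ max a b) : (x, y) ∈ chainSet f k := by
  obtain ⟨j1, hj1, ha⟩ := mem_chainSet_iff.1 ha
  obtain ⟨j2, hj2, hb⟩ := mem_chainSet_iff.1 hb
  rcases le_total j1 j2 with hle | hle
  · exact chain_slice_convex_aux h (j2 - j1) j1 j2 rfl hle hj2 ha hb hmin hmax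
  · exact chain_slice_convex_aux h (j1 - j2) j2 j1 rfl hle hj1 hb ha
      (by rwa [min_comm]) (by rwa [max_comm])


section Order

variable {f g : ℕ → ℝ × ℝ} {k k' : ℕ}

/-- If the two chains are disjoint and at the line `x = c` some point of `f` lies
below some point of `g`, then every point of `f` on that line lies below every point
of `g` on that line. -/
lemma slice_order (hf : IsChain f k) (hg : IsChain g k')
    (hdisj : ∀ p ∈ chainSet f k, p ∉ chainSet g k') {x a b a' b' : ℝ}
    (ha : (x, a) ∈ chainSet f k) (hb : (x, b) ∈ chainSet g k') (hab : a < b)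
    (ha' : (x, a') ∈ chainSet f k) (hb' : (x, b') ∈ chainSet g k') : a' < b' := by
  by_contra hc
  push_neg at hc
  have hne : b' ≠ a' := by
    intro he
    exact hdisj _ ha' (he ▸ hb')
  have hc' : b' < a' := lt_of_le_of_ne hc hne
  rcases le_total b a' with hba | hba
  · -- b between a and a' inside chain f
    have : ((x:ℝ), b) ∈ chainSet f k :=
      chain_slice_convex hf ha ha' (le_trans (min_le_left _ _) hab.le) (le_max_of_le_right hba)
    exact hdisj _ this hb
  · -- a' between b' and b inside chain g
    have : ((x:ℝ), a') ∈ chainSet g k' :=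
      chain_slice_convex hg hb' hb (le_trans (min_le_left _ _) hc'.le) (le_max_of_le_right hba)
    exact hdisj _ ha' this

/-- Two disjoint x-monotone chains cannot cross: if `f` is below `g` at `ξ` and above at
`η`, we get a contradiction. -/
lemma no_crossing (hf : IsChain f k) (hg : IsChain g k') (hk : 1 ≤ k) (hk' : 1 ≤ k')
    (hdisj : ∀ p ∈ chainSet f k, p ∉ chainSet g k') {ξ η : ℝ} (hle : ξ ≤ η)
    (hfl : (f 0).1 ≤ ξ) (hfr : η ≤ (f k).1) (hgl : (g 0).1 ≤ ξ) (hgr : η ≤ (g k').1)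
    (hbel : ∃ a b, (ξ, a) ∈ chainSet f k ∧ (ξ, b) ∈ chainSet g k' ∧ a < b)
    (habo : ∃ a b, (η, a) ∈ chainSet f k ∧ (η, b) ∈ chainSet g k' ∧ b < a) : False := by
  classical
  set crits : Finset ℝ := ((Finset.range (k+1)).image fun j => (f j).1) ∪
      ((Finset.range (k'+1)).image fun j => (g j).1) with hcrits
  -- base situation: no critical value strictly between
  have base : ∀ ξ η : ℝ, ξ ≤ η → (f 0).1 ≤ ξ → η ≤ (f k).1 → (g 0).1 ≤ ξ → η ≤ (g k').1 →
      (∀ c ∈ crits, c ≤ ξ ∨ η ≤ c) →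
      (∃ a b, (ξ, a) ∈ chainSet f k ∧ (ξ, b) ∈ chainSet g k' ∧ a < b) →
      (∃ a b, (η, a) ∈ chainSet f k ∧ (η, b) ∈ chainSet g k' ∧ b < a) → False := by
    intro ξ η hle hfl hfr hgl hgr hnc hbel habo
    obtain ⟨a0, b0, ha0, hb0, hab0⟩ := hbel
    obtain ⟨a1, b1, ha1, hb1, hab1⟩ := habo
    rcases eq_or_lt_of_le hle with rfl | hlt
    · exact absurd (slice_order hf hg hdisj ha0 hb0 hab0 ha1 hb1) (by linarith)
    · -- find the horizontal edges spanning [ξ, η]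
      have hmidf : (f 0).1 ≤ (ξ + η)/2 ∧ (ξ + η)/2 ≤ (f k).1 := ⟨by linarith, by linarith⟩
      have hmidg : (g 0).1 ≤ (ξ + η)/2 ∧ (ξ + η)/2 ≤ (g k').1 := ⟨by linarith, by linarith⟩
      obtain ⟨j, hj, hj1, hj2⟩ := exists_span hf hk hmidf.1 hmidf.2
      obtain ⟨j', hj', hj1', hj2'⟩ := exists_span hg hk' hmidg.1 hmidg.2
      have hcf : ∀ i ≤ k, (f i).1 ∈ crits := fun i hi => Finset.mem_union_left _
        (Finset.mem_image.2 ⟨i, Finset.mem_range.2 (by omega), rfl⟩)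
      have hcg : ∀ i ≤ k', (g i).1 ∈ crits := fun i hi => Finset.mem_union_right _
        (Finset.mem_image.2 ⟨i, Finset.mem_range.2 (by omega), rfl⟩)
      have hfj1 : (f j).1 ≤ ξ := by
        rcases hnc _ (hcf j (by omega)) with h | h
        · exact h
        · linarith
      have hfj2 : η ≤ (f (j+1)).1 := by
        rcases hnc _ (hcf (j+1) (by omega)) with h | h
        · linarith
        · exact h
      have hgj1 : (g j').1 ≤ ξ := by
        rcases hnc _ (hcg j' (by omega)) with h | h
        · exact h
        · linarith
      have hgj2 : η ≤ (g (j'+1)).1 := by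
        rcases hnc _ (hcg (j'+1) (by omega)) with h | h
        · linarith
        · exact h
      have hhf : (f j).2 = (f (j+1)).2 := by
        rcases hf.axis j hj with h | h
        · exfalso; rw [h] at hfj1; linarith
        · exact h
      have hhg : (g j').2 = (g (j'+1)).2 := by
        rcases hg.axis j' hj' with h | h
        · exfalso; rw [h] at hgj1; linarith
        · exact h
      have hfξ : ((ξ:ℝ), (f j).2) ∈ chainSet f k :=
        mem_chainSet_iff.2 ⟨j, hj, horiz_seg_mem hhf hfj1 (by linarith)⟩
      have hfη : ((η:ℝ), (f j).2) ∈ chainSet f k :=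
        mem_chainSet_iff.2 ⟨j, hj, horiz_seg_mem hhf (by linarith) hfj2⟩
      have hgξ : ((ξ:ℝ), (g j').2) ∈ chainSet g k' :=
        mem_chainSet_iff.2 ⟨j', hj', horiz_seg_mem hhg hgj1 (by linarith)⟩
      have hgη : ((η:ℝ), (g j').2) ∈ chainSet g k' :=
        mem_chainSet_iff.2 ⟨j', hj', horiz_seg_mem hhg (by linarith) hgj2⟩
      have h1 : (f j).2 < (g j').2 := slice_order hf hg hdisj ha0 hb0 hab0 hfξ hgξ
      have hdisj' : ∀ p ∈ chainSet g k', p ∉ chainSet f k := fun p hpB hpA => hdisj p hpA hpB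
      have h2 : (g j').2 < (f j).2 := slice_order hg hf hdisj' hb1 ha1 hab1 hgη hfη
      linarith
  -- strong induction on the number of critical values strictly between ξ and η
  suffices H : ∀ (N : ℕ) (ξ η : ℝ), (crits.filter (fun c => ξ < c ∧ c < η)).card ≤ N →
      ξ ≤ η → (f 0).1 ≤ ξ → η ≤ (f k).1 → (g 0).1 ≤ ξ → η ≤ (g k').1 →
      (∃ a b, (ξ, a) ∈ chainSet f k ∧ (ξ, b) ∈ chainSet g k' ∧ a < b) →
      (∃ a b, (η, a) ∈ chainSet f k ∧ (η, b) ∈ chainSet g k' ∧ b < a) → False by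
    exact H _ ξ η le_rfl hle hfl hfr hgl hgr hbel habo
  intro N
  induction N with
  | zero =>
    intro ξ η hcard hle hfl hfr hgl hgr hbel habo
    refine base ξ η hle hfl hfr hgl hgr ?_ hbel habo
    intro c hc
    by_contra hcc
    push_neg at hcc
    have : c ∈ crits.filter (fun c => ξ < c ∧ c < η) :=
      Finset.mem_filter.2 ⟨hc, hcc.1, hcc.2⟩
    have := Finset.card_pos.2 ⟨c, this⟩
    omega
  | succ N ih =>
    intro ξ η hcard hle hfl hfr hgl hgr hbel habo
    rcases Finset.eq_empty_or_nonempty (crits.filter (fun c => ξ < c ∧ c < η)) with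
      hemp | ⟨c, hc⟩
    · refine base ξ η hle hfl hfr hgl hgr ?_ hbel habo
      intro c hcm
      by_contra hcc
      push_neg at hcc
      have : c ∈ crits.filter (fun c => ξ < c ∧ c < η) :=
        Finset.mem_filter.2 ⟨hcm, hcc.1, hcc.2⟩
      rw [hemp] at this
      exact absurd this (Finset.notMem_empty c)
    · obtain ⟨hcc, hξc, hcη⟩ := Finset.mem_filter.1 hc
      obtain ⟨ya, hya⟩ := chain_slice_nonempty hf hk (x := c) (by linarith) (by linarith)
      obtain ⟨yb, hyb⟩ := chain_slice_nonempty hg hk' (x := c) (by linarith) (by linarith)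
      have hne : ya ≠ yb := by
        intro he
        exact hdisj _ hya (he ▸ hyb)
      rcases lt_or_gt_of_ne hne with hlt | hgt
      · -- below pair at c; recurse on [c, η]
        refine ih c η ?_ hcη.le (by linarith) hfr (by linarith) hgr ⟨ya, yb, hya, hyb, hlt⟩ habo
        have hsub : (crits.filter (fun d => c < d ∧ d < η)) ⊆
            (crits.filter (fun d => ξ < d ∧ d < η)).erase c := by
          intro d hd
          obtain ⟨hd1, hd2, hd3⟩ := Finset.mem_filter.1 hd
          exact Finset.mem_erase.2 ⟨by intro he; rw [he] at hd2; exact lt_irrefl _ hd2,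
            Finset.mem_filter.2 ⟨hd1, by linarith, hd3⟩⟩
        have := Finset.card_le_card hsub
        rw [Finset.card_erase_of_mem hc] at this
        omega
      · refine ih ξ c ?_ hξc.le hfl (by linarith) hgl (by linarith) hbel ⟨ya, yb, hya, hyb, hgt⟩
        have hsub : (crits.filter (fun d => ξ < d ∧ d < c)) ⊆
            (crits.filter (fun d => ξ < d ∧ d < η)).erase c := by
          intro d hd
          obtain ⟨hd1, hd2, hd3⟩ := Finset.mem_filter.1 hd
          exact Finset.mem_erase.2 ⟨by intro he; rw [he] at hd3; exact lt_irrefl _ hd3,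
            Finset.mem_filter.2 ⟨hd1, hd2, by linarith⟩⟩
        have := Finset.card_le_card hsub
        rw [Finset.card_erase_of_mem hc] at this
        omega

/-- Pointwise order consequence: a below-pair at `ξ` forces `f` below `g` at every `x`
in the common span. -/
lemma chain_below (hf : IsChain f k) (hg : IsChain g k') (hk : 1 ≤ k) (hk' : 1 ≤ k')
    (hdisj : ∀ p ∈ chainSet f k, p ∉ chainSet g k') {ξ x : ℝ}
    (hfl : (f 0).1 ≤ min ξ x) (hfr : max ξ x ≤ (f k).1)
    (hgl : (g 0).1 ≤ min ξ x) (hgr : max ξ x ≤ (g k').1)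
    (hbel : ∃ a b, (ξ, a) ∈ chainSet f k ∧ (ξ, b) ∈ chainSet g k' ∧ a < b)
    {a b : ℝ} (ha : (x, a) ∈ chainSet f k) (hb : (x, b) ∈ chainSet g k') : a < b := by
  by_contra hc
  push_neg at hc
  have hne : b ≠ a := by
    intro he
    exact hdisj _ ha (he ▸ hb)
  have hba : b < a := lt_of_le_of_ne hc hne
  have hdisj' : ∀ p ∈ chainSet g k', p ∉ chainSet f k := fun p hpB hpA => hdisj p hpA hpB
  rcases le_total ξ x with hlx | hlx
  · exact no_crossing hf hg hk hk' hdisj hlx (le_trans hfl (min_le_left _ _))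
      (le_trans (le_max_right _ _) hfr) (le_trans hgl (min_le_left _ _))
      (le_trans (le_max_right _ _) hgr) hbel ⟨a, b, ha, hb, hba⟩
  · obtain ⟨a0, b0, ha0, hb0, hab0⟩ := hbel
    exact no_crossing hg hf hk' hk hdisj' hlx (le_trans hgl (min_le_right _ _))
      (le_trans (le_max_left _ _) hgr) (le_trans hfl (min_le_right _ _))
      (le_trans (le_max_left _ _) hfr) ⟨b, a, hb, ha, hba⟩ ⟨b0, a0, hb0, ha0, hab0⟩

end Order

end NiceChain
namespace RectPolygon
open Fin.NatCast Fin.CommRing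

variable {n : ℕ} {P : RectPolygon n}

lemma not_vert_and_horiz (i : Fin (n + 1)) : ¬ (P.Vert i ∧ P.Horiz i) := by
  rintro ⟨hv, hh⟩
  exact P.nondegen i (Prod.ext hv hh)

lemma horiz_iff_not_vert (i : Fin (n + 1)) : P.Horiz i ↔ ¬ P.Vert i := by
  constructor
  · intro hh hv
    exact not_vert_and_horiz i ⟨hv, hh⟩
  · intro hv
    rcases P.axis i with h | h
    · exact absurd h hv
    · exact h

lemma vert_succ_iff (i : Fin (n + 1)) : P.Vert (i + 1) ↔ ¬ P.Vert i := by
  have h := P.alternate i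
  rw [show i + 2 = i + 1 + 1 from by ring] at h
  unfold Vert
  tauto

lemma vert_two_iff (i : Fin (n + 1)) : P.Vert (i + 1 + 1) ↔ P.Vert i := by
  rw [vert_succ_iff, vert_succ_iff]
  tauto

lemma cast_succ (o : Fin (n + 1)) (a : ℕ) :
    o + ((a : ℕ) : Fin (n + 1)) + 1 = o + (((a + 1 : ℕ)) : Fin (n + 1)) := by
  push_cast
  ring

lemma vert_add_even (i : Fin (n + 1)) (c : ℕ) :
    P.Vert (i + ((2 * c : ℕ) : Fin (n + 1))) ↔ P.Vert i := by
  induction c with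
  | zero => simp
  | succ c ih =>
    have h1 : ((2 * (c + 1) : ℕ) : Fin (n + 1)) = ((2 * c : ℕ) : Fin (n + 1)) + 1 + 1 := by
      push_cast; ring
    rw [h1, ← add_assoc, ← add_assoc, vert_two_iff]
    exact ih

lemma vert_add_odd (i : Fin (n + 1)) (c : ℕ) :
    P.Vert (i + ((2 * c + 1 : ℕ) : Fin (n + 1))) ↔ ¬ P.Vert i := by
  have h1 : ((2 * c + 1 : ℕ) : Fin (n + 1)) = ((2 * c : ℕ) : Fin (n + 1)) + 1 := by
    push_cast; ring
  rw [h1, ← add_assoc, vert_succ_iff, vert_add_even]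

lemma vert_sub_even (i : Fin (n + 1)) (c : ℕ) :
    P.Vert (i - ((2 * c : ℕ) : Fin (n + 1))) ↔ P.Vert i := by
  have := vert_add_even (P := P) (i - ((2 * c : ℕ) : Fin (n + 1))) c
  rw [sub_add_cancel] at this
  exact this.symm

lemma vert_sub_odd (i : Fin (n + 1)) (c : ℕ) :
    P.Vert (i - ((2 * c + 1 : ℕ) : Fin (n + 1))) ↔ ¬ P.Vert i := by
  have := vert_add_odd (P := P) (i - ((2 * c + 1 : ℕ) : Fin (n + 1))) c
  rw [sub_add_cancel] at this
  tauto

lemma horiz_cases {i : Fin (n + 1)} (h : P.Horiz i) : P.Rightward i ∨ P.Leftward i := by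
  rcases lt_trichotomy (P.v i).1 (P.v (i + 1)).1 with hlt | heq | hgt
  · exact Or.inl ⟨h, hlt⟩
  · exact absurd (Prod.ext heq h) (P.nondegen i)
  · exact Or.inr ⟨h, hgt⟩

lemma vert_cases {i : Fin (n + 1)} (h : P.Vert i) : P.Upward i ∨ P.Downward i := by
  rcases lt_trichotomy (P.v i).2 (P.v (i + 1)).2 with hlt | heq | hgt
  · exact Or.inl ⟨h, hlt⟩
  · exact absurd (Prod.ext h heq) (P.nondegen i)
  · exact Or.inr ⟨h, hgt⟩

lemma not_left_of_right {i : Fin (n + 1)} (h : P.Rightward i) : ¬ P.Leftward i := by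
  rintro ⟨-, hlt⟩
  exact absurd h.2 (by linarith)

lemma not_left_of_vert {i : Fin (n + 1)} (h : P.Vert i) : ¬ P.Leftward i := by
  rintro ⟨hh, -⟩
  exact not_vert_and_horiz i ⟨h, hh⟩

lemma not_right_of_left {i : Fin (n + 1)} (h : P.Leftward i) : ¬ P.Rightward i := by
  rintro ⟨-, hlt⟩
  exact absurd h.2 (by linarith)

lemma not_right_of_vert {i : Fin (n + 1)} (h : P.Vert i) : ¬ P.Rightward i := by
  rintro ⟨hh, -⟩
  exact not_vert_and_horiz i ⟨h, hh⟩

lemma horiz_of_right {i : Fin (n + 1)} (h : P.Rightward i) : ¬ P.Vert i :=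
  (horiz_iff_not_vert i).1 h.1

lemma horiz_of_left {i : Fin (n + 1)} (h : P.Leftward i) : ¬ P.Vert i :=
  (horiz_iff_not_vert i).1 h.1

/-- the number of vertices is even -/
lemma not_odd_card (P : RectPolygon n) : ¬ Odd (n + 1) := by
  rintro ⟨s, hs⟩
  have h0 : ((n + 1 : ℕ) : Fin (n + 1)) = 0 := by
    simp
  have h1 := vert_add_odd (P := P) (0 : Fin (n + 1)) s
  rw [show 2 * s + 1 = n + 1 by omega, h0, add_zero] at h1
  tauto

lemma cpos_le_n {i j : Fin (n + 1)} : cpos i j ≤ n := by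
  exact Nat.lt_succ_iff.1 (j - i).isLt

lemma coe_cpos (i j : Fin (n + 1)) : ((cpos i j : ℕ) : Fin (n + 1)) = j - i := by
  simp [cpos, Fin.cast_val_eq_self]

lemma cpos_eq_zero_iff {i j : Fin (n + 1)} : cpos i j = 0 ↔ j = i := by
  constructor
  · intro h
    have h2 : j - i = 0 := Fin.ext (by simpa [cpos] using h)
    rwa [sub_eq_zero] at h2
  · rintro rfl
    simp [cpos]

lemma add_cpos (o e : Fin (n + 1)) : o + ((cpos o e : ℕ) : Fin (n + 1)) = e := by
  rw [coe_cpos]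
  abel

lemma cpos_add (o : Fin (n + 1)) {a : ℕ} (ha : a ≤ n) : cpos o (o + (a : Fin (n + 1))) = a := by
  unfold cpos
  rw [add_sub_cancel_left]
  exact Fin.val_cast_of_lt (by omega)

/-- parity of the cyclic distance between two horizontal edges is even -/
lemma cpos_even_of_horiz {i j : Fin (n + 1)} (hi : P.Horiz i) (hj : P.Horiz j) :
    Even (cpos i j) := by
  rcases Nat.even_or_odd (cpos i j) with he | ho
  · exact he
  · exfalso
    obtain ⟨c, hc⟩ := ho
    have hji : i + ((cpos i j : ℕ) : Fin (n + 1)) = j := add_cpos i j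
    have := vert_add_odd (P := P) i c
    rw [show 2 * c + 1 = cpos i j by omega, hji] at this
    rw [horiz_iff_not_vert] at hi hj
    tauto

lemma coe_fin_inj {a b : ℕ} (ha : a ≤ n) (hb : b ≤ n) :
    (a : Fin (n + 1)) = (b : Fin (n + 1)) ↔ a = b := by
  constructor
  · intro h
    have := congrArg Fin.val h
    rwa [Fin.val_cast_of_lt (by omega), Fin.val_cast_of_lt (by omega)] at this
  · rintro rfl; rfl

lemma add_coe_inj (o : Fin (n + 1)) {a b : ℕ} (ha : a ≤ n) (hb : b ≤ n) :
    o + (a : Fin (n + 1)) = o + (b : Fin (n + 1)) ↔ a = b := by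
  rw [add_right_inj]
  exact coe_fin_inj ha hb

lemma sub_coe_eq_add (o : Fin (n + 1)) {a : ℕ} (ha : a ≤ n + 1) :
    o - (a : Fin (n + 1)) = o + (((n + 1 - a : ℕ)) : Fin (n + 1)) := by
  have h : ((a : ℕ) : Fin (n + 1)) + ((n + 1 - a : ℕ) : Fin (n + 1)) = 0 := by
    have : ((a + (n + 1 - a) : ℕ) : Fin (n + 1)) = ((n + 1 : ℕ) : Fin (n + 1)) := by
      congr 1
      omega
    push_cast at this
    simpa using this
  have h2 : ((n + 1 - a : ℕ) : Fin (n + 1)) = -(a : Fin (n + 1)) :=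
    eq_neg_of_add_eq_zero_right h
  rw [h2, ← sub_eq_add_neg]

end RectPolygon
namespace RectPolygon
open Fin.NatCast Fin.CommRing

variable {n : ℕ} {P : RectPolygon n}

lemma cast_sub_succ (o : Fin (n + 1)) (a : ℕ) :
    o - ((a : ℕ) : Fin (n + 1)) - 1 = o - (((a + 1 : ℕ)) : Fin (n + 1)) := by
  rw [sub_sub]
  congr 1
  push_cast
  ring

lemma sub_succ_comm (o : Fin (n + 1)) (d : ℕ) :
    o - (((d + 1 : ℕ)) : Fin (n + 1)) = (o - 1) - ((d : ℕ) : Fin (n + 1)) := by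
  rw [← cast_sub_succ o d, sub_right_comm]

lemma walk_fwd_R (hP : P.Nice) {e : Fin (n + 1)} (he : P.Rightward e)
    {j0 : Fin (n + 1)} (hj0 : P.Leftward j0) :
    ∃ D : ℕ, 1 ≤ D ∧ 2 * D ≤ n ∧
      P.RightmostEdge (e + ((2 * D - 1 : ℕ) : Fin (n + 1))) ∧
      ∀ d : ℕ, d < 2 * D - 1 → ¬ P.Leftward (e + ((d : ℕ) : Fin (n + 1))) := by
  classical
  have ht : e + ((cpos e j0 : ℕ) : Fin (n + 1)) = j0 := add_cpos e j0
  have htle : cpos e j0 ≤ n := cpos_le_n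
  obtain ⟨s, hs⟩ := cpos_even_of_horiz (P := P) he.1 hj0.1
  have hs0 : 1 ≤ s := by
    rcases Nat.eq_zero_or_pos s with rfl | h
    · exfalso
      have h0 : cpos e j0 = 0 := by omega
      rw [cpos_eq_zero_iff] at h0
      subst h0
      exact not_right_of_left hj0 he
    · exact h
  have hQs : ¬ P.Rightward (e + ((2 * (s - 1 + 1) : ℕ) : Fin (n + 1))) := by
    rw [show 2 * (s - 1 + 1) = cpos e j0 by omega, ht]
    exact not_right_of_left hj0
  have hQ : ∃ d : ℕ, ¬ P.Rightward (e + ((2 * (d + 1) : ℕ) : Fin (n + 1))) := ⟨s - 1, hQs⟩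
  set D := Nat.find hQ + 1 with hD
  have hfind : ¬ P.Rightward (e + ((2 * D : ℕ) : Fin (n + 1))) := by
    have h1 := Nat.find_spec hQ
    rwa [show Nat.find hQ + 1 = D by omega] at h1
  have hrun : ∀ d : ℕ, 1 ≤ d → d < D → P.Rightward (e + ((2 * d : ℕ) : Fin (n + 1))) := by
    intro d h1 h2
    have h3 := Nat.find_min hQ (m := d - 1) (by omega)
    rw [not_not, show d - 1 + 1 = d by omega] at h3
    exact h3
  have hDs : D ≤ s := by
    have := Nat.find_min' hQ hQs
    omega
  have h2Dn : 2 * D ≤ n := by omega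
  have hhe : ¬ P.Vert e := (horiz_iff_not_vert e).1 he.1
  have hf : P.Leftward (e + ((2 * D : ℕ) : Fin (n + 1))) := by
    have hh : P.Horiz (e + ((2 * D : ℕ) : Fin (n + 1))) := by
      rw [horiz_iff_not_vert, vert_add_even]
      exact hhe
    rcases horiz_cases hh with h | h
    · exact absurd h hfind
    · exact h
  set w := e + ((2 * D - 1 : ℕ) : Fin (n + 1)) with hwdef
  have hw : P.Vert w := by
    rw [hwdef, show (2 * D - 1 : ℕ) = 2 * (D - 1) + 1 by omega, vert_add_odd]
    exact hhe
  have hw1 : w + 1 = e + ((2 * D : ℕ) : Fin (n + 1)) := by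
    rw [hwdef, cast_succ, show (2 * D - 1 + 1) = 2 * D by omega]
  have hwm1 : w - 1 = e + ((2 * D - 2 : ℕ) : Fin (n + 1)) := by
    rw [sub_eq_iff_eq_add, hwdef, show (2 * D - 1 : ℕ) = 2 * D - 2 + 1 by omega, ← cast_succ]
  have hwm1R : P.Rightward (w - 1) := by
    rw [hwm1]
    rcases Nat.eq_or_lt_of_le (show 1 ≤ D by omega) with h1 | h1
    · rw [show (2 * D - 2 : ℕ) = 0 by omega]
      simpa using he
    · have := hrun (D - 1) (by omega) (by omega)
      rwa [show 2 * (D - 1) = 2 * D - 2 by omega] at this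
  have hwL : P.Leftward (w + 1) := by rw [hw1]; exact hf
  rcases vert_cases hw with hup | hdn
  · exact absurd ⟨hup, hwm1R, hwL⟩ (hP.2 w)
  · refine ⟨D, by omega, h2Dn, ⟨hdn, hwm1R, hwL⟩, ?_⟩
    intro d hd
    rcases Nat.even_or_odd d with ⟨c, hc⟩ | ⟨c, hc⟩
    · rcases Nat.eq_zero_or_pos c with rfl | hc1
      · rw [show d = 0 by omega]
        simpa using not_left_of_right he
      · have := hrun c (by omega) (by omega)
        rw [show d = 2 * c by omega]
        exact not_left_of_right this
    · rw [show d = 2 * c + 1 by omega]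
      refine not_left_of_vert ?_
      rw [vert_add_odd]
      exact hhe

lemma walk_fwd_L (hP : P.Nice) {e : Fin (n + 1)} (he : P.Leftward e)
    {j0 : Fin (n + 1)} (hj0 : P.Rightward j0) :
    ∃ D : ℕ, 1 ≤ D ∧ 2 * D ≤ n ∧
      P.LeftmostEdge (e + ((2 * D - 1 : ℕ) : Fin (n + 1))) ∧
      ∀ d : ℕ, d < 2 * D - 1 → ¬ P.Rightward (e + ((d : ℕ) : Fin (n + 1))) := by
  classical
  have ht : e + ((cpos e j0 : ℕ) : Fin (n + 1)) = j0 := add_cpos e j0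
  have htle : cpos e j0 ≤ n := cpos_le_n
  obtain ⟨s, hs⟩ := cpos_even_of_horiz (P := P) he.1 hj0.1
  have hs0 : 1 ≤ s := by
    rcases Nat.eq_zero_or_pos s with rfl | h
    · exfalso
      have h0 : cpos e j0 = 0 := by omega
      rw [cpos_eq_zero_iff] at h0
      subst h0
      exact not_right_of_left he hj0
    · exact h
  have hQs : ¬ P.Leftward (e + ((2 * (s - 1 + 1) : ℕ) : Fin (n + 1))) := by
    rw [show 2 * (s - 1 + 1) = cpos e j0 by omega, ht]
    exact not_left_of_right hj0
  have hQ : ∃ d : ℕ, ¬ P.Leftward (e + ((2 * (d + 1) : ℕ) : Fin (n + 1))) := ⟨s - 1, hQs⟩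
  set D := Nat.find hQ + 1 with hD
  have hfind : ¬ P.Leftward (e + ((2 * D : ℕ) : Fin (n + 1))) := by
    have h1 := Nat.find_spec hQ
    rwa [show Nat.find hQ + 1 = D by omega] at h1
  have hrun : ∀ d : ℕ, 1 ≤ d → d < D → P.Leftward (e + ((2 * d : ℕ) : Fin (n + 1))) := by
    intro d h1 h2
    have h3 := Nat.find_min hQ (m := d - 1) (by omega)
    rw [not_not, show d - 1 + 1 = d by omega] at h3
    exact h3
  have hDs : D ≤ s := by
    have := Nat.find_min' hQ hQs
    omega
  have h2Dn : 2 * D ≤ n := by omega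
  have hhe : ¬ P.Vert e := (horiz_iff_not_vert e).1 he.1
  have hf : P.Rightward (e + ((2 * D : ℕ) : Fin (n + 1))) := by
    have hh : P.Horiz (e + ((2 * D : ℕ) : Fin (n + 1))) := by
      rw [horiz_iff_not_vert, vert_add_even]
      exact hhe
    rcases horiz_cases hh with h | h
    · exact h
    · exact absurd h hfind
  set w := e + ((2 * D - 1 : ℕ) : Fin (n + 1)) with hwdef
  have hw : P.Vert w := by
    rw [hwdef, show (2 * D - 1 : ℕ) = 2 * (D - 1) + 1 by omega, vert_add_odd]
    exact hhe
  have hw1 : w + 1 = e + ((2 * D : ℕ) : Fin (n + 1)) := by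
    rw [hwdef, cast_succ, show (2 * D - 1 + 1) = 2 * D by omega]
  have hwm1 : w - 1 = e + ((2 * D - 2 : ℕ) : Fin (n + 1)) := by
    rw [sub_eq_iff_eq_add, hwdef, show (2 * D - 1 : ℕ) = 2 * D - 2 + 1 by omega, ← cast_succ]
  have hwm1L : P.Leftward (w - 1) := by
    rw [hwm1]
    rcases Nat.eq_or_lt_of_le (show 1 ≤ D by omega) with h1 | h1
    · rw [show (2 * D - 2 : ℕ) = 0 by omega]
      simpa using he
    · have := hrun (D - 1) (by omega) (by omega)
      rwa [show 2 * (D - 1) = 2 * D - 2 by omega] at this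
  have hwR : P.Rightward (w + 1) := by rw [hw1]; exact hf
  rcases vert_cases hw with hup | hdn
  · refine ⟨D, by omega, h2Dn, ⟨hup, hwm1L, hwR⟩, ?_⟩
    intro d hd
    rcases Nat.even_or_odd d with ⟨c, hc⟩ | ⟨c, hc⟩
    · rcases Nat.eq_zero_or_pos c with rfl | hc1
      · rw [show d = 0 by omega]
        simpa using not_right_of_left he
      · have := hrun c (by omega) (by omega)
        rw [show d = 2 * c by omega]
        exact not_right_of_left this
    · rw [show d = 2 * c + 1 by omega]
      refine not_right_of_vert ?_
      rw [vert_add_odd]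
      exact hhe
  · exact absurd ⟨hdn, hwm1L, hwR⟩ (hP.1.1 w)

lemma walk_bwd_R (hP : P.Nice) {e : Fin (n + 1)} (he : P.Rightward e)
    {j0 : Fin (n + 1)} (hj0 : P.Leftward j0) :
    ∃ D : ℕ, 1 ≤ D ∧ 2 * D ≤ n ∧
      P.LeftmostEdge (e - ((2 * D - 1 : ℕ) : Fin (n + 1))) ∧
      ∀ d : ℕ, d < 2 * D - 1 → ¬ P.Leftward (e - ((d : ℕ) : Fin (n + 1))) := by
  classical
  have ht : e - ((cpos j0 e : ℕ) : Fin (n + 1)) = j0 := by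
    have h := add_cpos j0 e
    rw [eq_comm, eq_sub_iff_add_eq]
    exact h
  have htle : cpos j0 e ≤ n := cpos_le_n
  obtain ⟨s, hs⟩ := cpos_even_of_horiz (P := P) hj0.1 he.1
  have hs0 : 1 ≤ s := by
    rcases Nat.eq_zero_or_pos s with rfl | h
    · exfalso
      have h0 : cpos j0 e = 0 := by omega
      rw [cpos_eq_zero_iff] at h0
      subst h0
      exact not_right_of_left hj0 he
    · exact h
  have hQs : ¬ P.Rightward (e - ((2 * (s - 1 + 1) : ℕ) : Fin (n + 1))) := by
    rw [show 2 * (s - 1 + 1) = cpos j0 e by omega, ht]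
    exact not_right_of_left hj0
  have hQ : ∃ d : ℕ, ¬ P.Rightward (e - ((2 * (d + 1) : ℕ) : Fin (n + 1))) := ⟨s - 1, hQs⟩
  set D := Nat.find hQ + 1 with hD
  have hfind : ¬ P.Rightward (e - ((2 * D : ℕ) : Fin (n + 1))) := by
    have h1 := Nat.find_spec hQ
    rwa [show Nat.find hQ + 1 = D by omega] at h1
  have hrun : ∀ d : ℕ, 1 ≤ d → d < D → P.Rightward (e - ((2 * d : ℕ) : Fin (n + 1))) := by
    intro d h1 h2
    have h3 := Nat.find_min hQ (m := d - 1) (by omega)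
    rw [not_not, show d - 1 + 1 = d by omega] at h3
    exact h3
  have hDs : D ≤ s := by
    have := Nat.find_min' hQ hQs
    omega
  have h2Dn : 2 * D ≤ n := by omega
  have hhe : ¬ P.Vert e := (horiz_iff_not_vert e).1 he.1
  have hf : P.Leftward (e - ((2 * D : ℕ) : Fin (n + 1))) := by
    have hh : P.Horiz (e - ((2 * D : ℕ) : Fin (n + 1))) := by
      rw [horiz_iff_not_vert, vert_sub_even]
      exact hhe
    rcases horiz_cases hh with h | h
    · exact absurd h hfind
    · exact h
  set w := e - ((2 * D - 1 : ℕ) : Fin (n + 1)) with hwdef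
  have hw : P.Vert w := by
    rw [hwdef, show (2 * D - 1 : ℕ) = 2 * (D - 1) + 1 by omega, vert_sub_odd]
    exact hhe
  have hwm1 : w - 1 = e - ((2 * D : ℕ) : Fin (n + 1)) := by
    rw [hwdef, cast_sub_succ, show (2 * D - 1 + 1) = 2 * D by omega]
  have hw1 : w + 1 = e - ((2 * D - 2 : ℕ) : Fin (n + 1)) := by
    have := cast_sub_succ e (2 * D - 2)
    rw [show (2 * D - 2 + 1 : ℕ) = 2 * D - 1 by omega] at this
    rw [hwdef, ← this, sub_add_cancel]
  have hwm1L : P.Leftward (w - 1) := by rw [hwm1]; exact hf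
  have hw1R : P.Rightward (w + 1) := by
    rw [hw1]
    rcases Nat.eq_or_lt_of_le (show 1 ≤ D by omega) with h1 | h1
    · rw [show (2 * D - 2 : ℕ) = 0 by omega]
      simpa using he
    · have := hrun (D - 1) (by omega) (by omega)
      rwa [show 2 * (D - 1) = 2 * D - 2 by omega] at this
  rcases vert_cases hw with hup | hdn
  · refine ⟨D, by omega, h2Dn, ⟨hup, hwm1L, hw1R⟩, ?_⟩
    intro d hd
    rcases Nat.even_or_odd d with ⟨c, hc⟩ | ⟨c, hc⟩
    · rcases Nat.eq_zero_or_pos c with rfl | hc1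
      · rw [show d = 0 by omega]
        simpa using not_left_of_right he
      · have := hrun c (by omega) (by omega)
        rw [show d = 2 * c by omega]
        exact not_left_of_right this
    · rw [show d = 2 * c + 1 by omega]
      refine not_left_of_vert ?_
      rw [vert_sub_odd]
      exact hhe
  · exact absurd ⟨hdn, hwm1L, hw1R⟩ (hP.1.1 w)

lemma walk_bwd_L (hP : P.Nice) {e : Fin (n + 1)} (he : P.Leftward e)
    {j0 : Fin (n + 1)} (hj0 : P.Rightward j0) :
    ∃ D : ℕ, 1 ≤ D ∧ 2 * D ≤ n ∧
      P.RightmostEdge (e - ((2 * D - 1 : ℕ) : Fin (n + 1))) ∧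
      ∀ d : ℕ, d < 2 * D - 1 → ¬ P.Rightward (e - ((d : ℕ) : Fin (n + 1))) := by
  classical
  have ht : e - ((cpos j0 e : ℕ) : Fin (n + 1)) = j0 := by
    have h := add_cpos j0 e
    rw [eq_comm, eq_sub_iff_add_eq]
    exact h
  have htle : cpos j0 e ≤ n := cpos_le_n
  obtain ⟨s, hs⟩ := cpos_even_of_horiz (P := P) hj0.1 he.1
  have hs0 : 1 ≤ s := by
    rcases Nat.eq_zero_or_pos s with rfl | h
    · exfalso
      have h0 : cpos j0 e = 0 := by omega
      rw [cpos_eq_zero_iff] at h0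
      subst h0
      exact not_right_of_left he hj0
    · exact h
  have hQs : ¬ P.Leftward (e - ((2 * (s - 1 + 1) : ℕ) : Fin (n + 1))) := by
    rw [show 2 * (s - 1 + 1) = cpos j0 e by omega, ht]
    exact not_left_of_right hj0
  have hQ : ∃ d : ℕ, ¬ P.Leftward (e - ((2 * (d + 1) : ℕ) : Fin (n + 1))) := ⟨s - 1, hQs⟩
  set D := Nat.find hQ + 1 with hD
  have hfind : ¬ P.Leftward (e - ((2 * D : ℕ) : Fin (n + 1))) := by
    have h1 := Nat.find_spec hQ
    rwa [show Nat.find hQ + 1 = D by omega] at h1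
  have hrun : ∀ d : ℕ, 1 ≤ d → d < D → P.Leftward (e - ((2 * d : ℕ) : Fin (n + 1))) := by
    intro d h1 h2
    have h3 := Nat.find_min hQ (m := d - 1) (by omega)
    rw [not_not, show d - 1 + 1 = d by omega] at h3
    exact h3
  have hDs : D ≤ s := by
    have := Nat.find_min' hQ hQs
    omega
  have h2Dn : 2 * D ≤ n := by omega
  have hhe : ¬ P.Vert e := (horiz_iff_not_vert e).1 he.1
  have hf : P.Rightward (e - ((2 * D : ℕ) : Fin (n + 1))) := by
    have hh : P.Horiz (e - ((2 * D : ℕ) : Fin (n + 1))) := by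
      rw [horiz_iff_not_vert, vert_sub_even]
      exact hhe
    rcases horiz_cases hh with h | h
    · exact h
    · exact absurd h hfind
  set w := e - ((2 * D - 1 : ℕ) : Fin (n + 1)) with hwdef
  have hw : P.Vert w := by
    rw [hwdef, show (2 * D - 1 : ℕ) = 2 * (D - 1) + 1 by omega, vert_sub_odd]
    exact hhe
  have hwm1 : w - 1 = e - ((2 * D : ℕ) : Fin (n + 1)) := by
    rw [hwdef, cast_sub_succ, show (2 * D - 1 + 1) = 2 * D by omega]
  have hw1 : w + 1 = e - ((2 * D - 2 : ℕ) : Fin (n + 1)) := by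
    have := cast_sub_succ e (2 * D - 2)
    rw [show (2 * D - 2 + 1 : ℕ) = 2 * D - 1 by omega] at this
    rw [hwdef, ← this, sub_add_cancel]
  have hwm1R : P.Rightward (w - 1) := by rw [hwm1]; exact hf
  have hw1L : P.Leftward (w + 1) := by
    rw [hw1]
    rcases Nat.eq_or_lt_of_le (show 1 ≤ D by omega) with h1 | h1
    · rw [show (2 * D - 2 : ℕ) = 0 by omega]
      simpa using he
    · have := hrun (D - 1) (by omega) (by omega)
      rwa [show 2 * (D - 1) = 2 * D - 2 by omega] at this
  rcases vert_cases hw with hup | hdn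
  · exact absurd ⟨hup, hwm1R, hw1L⟩ (hP.2 w)
  · refine ⟨D, by omega, h2Dn, ⟨hdn, hwm1R, hw1L⟩, ?_⟩
    intro d hd
    rcases Nat.even_or_odd d with ⟨c, hc⟩ | ⟨c, hc⟩
    · rcases Nat.eq_zero_or_pos c with rfl | hc1
      · rw [show d = 0 by omega]
        simpa using not_right_of_left he
      · have := hrun c (by omega) (by omega)
        rw [show d = 2 * c by omega]
        exact not_right_of_left this
    · rw [show d = 2 * c + 1 by omega]
      refine not_right_of_vert ?_
      rw [vert_sub_odd]
      exact hhe

end RectPolygon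
namespace NiceChain
open Fin.NatCast Fin.CommRing

lemma seg_y_mem {p q z : ℝ × ℝ} (h : z ∈ segment ℝ p q) :
    min p.2 q.2 ≤ z.2 ∧ z.2 ≤ max p.2 q.2 := by
  rw [mem_seg_iff] at h
  obtain ⟨t, h0, h1, -, hy⟩ := h
  constructor
  · rcases le_total p.2 q.2 with hpq | hpq <;> rw [hy] <;>
      [rw [min_eq_left hpq]; rw [min_eq_right hpq]] <;> nlinarith
  · rcases le_total p.2 q.2 with hpq | hpq <;> rw [hy] <;>
      [rw [max_eq_right hpq]; rw [max_eq_left hpq]] <;> nlinarith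

/-- slice at the left endpoint of a chain whose first edge is strictly rightward -/
lemma chain_slice_left {f : ℕ → ℝ × ℝ} {k : ℕ} (h : IsChain f k) (hk : 1 ≤ k)
    (hstrict : (f 0).1 < (f 1).1) {y : ℝ} (hy : ((f 0).1, y) ∈ chainSet f k) :
    y = (f 0).2 := by
  obtain ⟨j, hj, hmem⟩ := mem_chainSet_iff.1 hy
  rcases Nat.eq_zero_or_pos j with rfl | hj1
  · have hax : (f 0).2 = (f (0 + 1)).2 := by
      rcases h.axis 0 hk with hx | hy2
      · exact absurd hx (ne_of_lt hstrict)
      · exact hy2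
    have := horiz_seg_y hax hmem
    simpa using this
  · exfalso
    have h1 := (seg_x_mem hmem).1
    rw [min_eq_left (h.mono j hj)] at h1
    have h1' : (f j).1 ≤ (f 0).1 := h1
    have h2 : (f 1).1 ≤ (f j).1 := h.x_le hj1 (by omega)
    linarith

/-- slice at the right endpoint of a chain whose last edge is strictly rightward -/
lemma chain_slice_right {f : ℕ → ℝ × ℝ} {k : ℕ} (h : IsChain f k) (hk : 1 ≤ k)
    (hstrict : (f (k - 1)).1 < (f k).1) {y : ℝ} (hy : ((f k).1, y) ∈ chainSet f k) :
    y = (f k).2 := by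
  obtain ⟨j, hj, hmem⟩ := mem_chainSet_iff.1 hy
  rcases Nat.lt_or_ge j (k - 1) with hj1 | hj1
  · exfalso
    have h1 := (seg_x_mem hmem).2
    rw [max_eq_right (h.mono j hj)] at h1
    have h1' : (f k).1 ≤ (f (j + 1)).1 := h1
    have h2 : (f (j + 1)).1 ≤ (f (k - 1)).1 := h.x_le (by omega) (by omega)
    linarith
  · have hjk : j = k - 1 := by omega
    subst hjk
    have hax : (f (k - 1)).2 = (f (k - 1 + 1)).2 := by
      rcases h.axis (k - 1) (by omega) with ha | hb
      · exfalso
        rw [show k - 1 + 1 = k by omega] at ha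
        linarith
      · exact hb
    have hthis : y = (f (k - 1)).2 := horiz_seg_y hax hmem
    rw [hthis, hax, show k - 1 + 1 = k by omega]

end NiceChain

namespace RectPolygon
open Fin.NatCast Fin.CommRing

open NiceChain

variable {n : ℕ} {P : RectPolygon n}

lemma x_le_succ {i : Fin (n + 1)} (h : ¬ P.Leftward i) : (P.v i).1 ≤ (P.v (i + 1)).1 := by
  rcases P.axis i with hv | hh
  · exact le_of_eq hv
  · rcases horiz_cases (P := P) hh with hr | hl
    · exact hr.2.le
    · exact absurd hl h

lemma x_succ_le {i : Fin (n + 1)} (h : ¬ P.Rightward i) : (P.v (i + 1)).1 ≤ (P.v i).1 := by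
  rcases P.axis i with hv | hh
  · exact le_of_eq hv.symm
  · rcases horiz_cases (P := P) hh with hr | hl
    · exact absurd hr h
    · exact hl.2.le

/-- forward chain of vertices starting at vertex `c` -/
def fchain (P : RectPolygon n) (c : Fin (n + 1)) : ℕ → ℝ × ℝ :=
  fun j => P.v (c + ((j : ℕ) : Fin (n + 1)))

/-- backward chain of vertices starting at vertex `c` -/
def bchain (P : RectPolygon n) (c : Fin (n + 1)) : ℕ → ℝ × ℝ :=
  fun j => P.v (c - ((j : ℕ) : Fin (n + 1)))

@[simp] lemma fchain_apply (c : Fin (n + 1)) (j : ℕ) :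
    P.fchain c j = P.v (c + ((j : ℕ) : Fin (n + 1))) := rfl

@[simp] lemma bchain_apply (c : Fin (n + 1)) (j : ℕ) :
    P.bchain c j = P.v (c - ((j : ℕ) : Fin (n + 1))) := rfl

lemma fwd_isChain (c : Fin (n + 1)) (K : ℕ)
    (hrun : ∀ d : ℕ, d < K → ¬ P.Leftward (c + ((d : ℕ) : Fin (n + 1)))) :
    IsChain (P.fchain c) K := by
  constructor
  · intro j hj
    simp only [fchain_apply]
    rw [← cast_succ]
    exact P.axis _
  · intro j hj
    simp only [fchain_apply]
    rw [← cast_succ]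
    exact x_le_succ (hrun j hj)

lemma fwd_mem_iff (c : Fin (n + 1)) (K : ℕ) {p : ℝ × ℝ} :
    p ∈ chainSet (P.fchain c) K ↔
      ∃ d < K, p ∈ P.edge (c + ((d : ℕ) : Fin (n + 1))) := by
  rw [mem_chainSet_iff]
  simp only [fchain_apply]
  constructor
  · rintro ⟨j, hj, hm⟩
    refine ⟨j, hj, ?_⟩
    unfold edge
    rwa [cast_succ]
  · rintro ⟨d, hd, hm⟩
    refine ⟨d, hd, ?_⟩
    unfold edge at hm
    rwa [cast_succ] at hm

lemma bwd_isChain (c : Fin (n + 1)) (K : ℕ)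
    (hrun : ∀ d : ℕ, d < K → ¬ P.Rightward (c - (((d + 1 : ℕ)) : Fin (n + 1)))) :
    IsChain (P.bchain c) K := by
  have key : ∀ j : ℕ, c - (((j + 1 : ℕ)) : Fin (n + 1)) + 1 = c - ((j : ℕ) : Fin (n + 1)) := by
    intro j
    rw [← cast_sub_succ, sub_add_cancel]
  constructor
  · intro j hj
    simp only [bchain_apply]
    have := P.axis (c - (((j + 1 : ℕ)) : Fin (n + 1)))
    rw [key j] at this
    tauto
  · intro j hj
    simp only [bchain_apply]
    have := x_succ_le (hrun j hj)
    rwa [key j] at this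

lemma bwd_mem_iff (c : Fin (n + 1)) (K : ℕ) {p : ℝ × ℝ} :
    p ∈ chainSet (P.bchain c) K ↔
      ∃ d < K, p ∈ P.edge (c - (((d + 1 : ℕ)) : Fin (n + 1))) := by
  have key : ∀ j : ℕ, c - (((j + 1 : ℕ)) : Fin (n + 1)) + 1 = c - ((j : ℕ) : Fin (n + 1)) := by
    intro j
    rw [← cast_sub_succ, sub_add_cancel]
  rw [mem_chainSet_iff]
  simp only [bchain_apply]
  constructor
  · rintro ⟨j, hj, hm⟩
    refine ⟨j, hj, ?_⟩
    unfold edge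
    rw [key j, segment_symm]
    exact hm
  · rintro ⟨d, hd, hm⟩
    refine ⟨d, hd, ?_⟩
    unfold edge at hm
    rw [key d, segment_symm] at hm
    exact hm

lemma mem_edge_vert {i : Fin (n + 1)} (hv : P.Vert i) {p : ℝ × ℝ} (hp : p ∈ P.edge i) :
    p.1 = (P.v i).1 ∧ min (P.v i).2 (P.v (i + 1)).2 ≤ p.2 ∧
      p.2 ≤ max (P.v i).2 (P.v (i + 1)).2 := by
  have hx := seg_x_mem hp
  have hy := seg_y_mem hp
  refine ⟨?_, hy.1, hy.2⟩
  have hvv : (P.v i).1 = (P.v (i + 1)).1 := hv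
  rw [← hvv, min_self, max_self] at hx
  exact le_antisymm hx.2 hx.1

lemma vert_mem_edge {i : Fin (n + 1)} (hv : P.Vert i) {y : ℝ}
    (h1 : min (P.v i).2 (P.v (i + 1)).2 ≤ y) (h2 : y ≤ max (P.v i).2 (P.v (i + 1)).2) :
    ((P.v i).1, y) ∈ P.edge i :=
  vert_seg_mem hv h1 h2

lemma edge_disjoint_offsets (o : Fin (n + 1)) {a b : ℕ} (ha : a ≤ n) (hb : b ≤ n)
    (h1 : b ≠ a) (h2 : b ≠ a + 1) (h3 : a ≠ b + 1) (h4 : ¬(a = n ∧ b = 0))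
    (h5 : ¬(b = n ∧ a = 0)) :
    ∀ p ∈ P.edge (o + ((a : ℕ) : Fin (n + 1))), p ∉ P.edge (o + ((b : ℕ) : Fin (n + 1))) := by
  have hd := P.simple (o + ((a : ℕ) : Fin (n + 1))) (o + ((b : ℕ) : Fin (n + 1))) ?_ ?_ ?_
  · intro p hp hq
    exact Set.disjoint_left.1 hd hp hq
  · rw [Ne, add_coe_inj o hb ha]
    exact h1
  · rw [cast_succ, Ne]
    rcases Nat.lt_or_ge a n with han | han
    · rw [add_coe_inj o hb (by omega)]
      exact h2
    · have han' : a = n := by omega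
      have h0 : (((a + 1 : ℕ)) : Fin (n + 1)) = ((0 : ℕ) : Fin (n + 1)) := by
        rw [han']
        simp
      rw [h0, add_coe_inj o hb (by omega)]
      intro hb0
      exact h4 ⟨han', hb0⟩
  · rw [cast_succ, Ne]
    rcases Nat.lt_or_ge b n with hbn | hbn
    · rw [add_coe_inj o (by omega) ha]
      exact fun h => h3 h.symm
    · have hbn' : b = n := by omega
      have h0 : (((b + 1 : ℕ)) : Fin (n + 1)) = ((0 : ℕ) : Fin (n + 1)) := by
        rw [hbn']
        simp
      rw [h0, add_coe_inj o (by omega) ha]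
      intro ha0
      exact h5 ⟨hbn', ha0.symm⟩

lemma offset_sub (o : Fin (n + 1)) {a b : ℕ} (hba : b ≤ a) :
    o - ((a - b : ℕ) : Fin (n + 1)) = o - ((a : ℕ) : Fin (n + 1)) + ((b : ℕ) : Fin (n + 1)) := by
  rw [Nat.cast_sub hba]
  ring

lemma succ_offset (o : Fin (n + 1)) (d : ℕ) :
    (o + 1) + ((d : ℕ) : Fin (n + 1)) = o + (((d + 1 : ℕ)) : Fin (n + 1)) := by
  rw [add_right_comm, cast_succ]

lemma add_offset_sub (o : Fin (n + 1)) {a b : ℕ} (hba : b ≤ a) :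
    o + ((a : ℕ) : Fin (n + 1)) - ((b : ℕ) : Fin (n + 1)) = o + ((a - b : ℕ) : Fin (n + 1)) := by
  rw [Nat.cast_sub hba]
  ring

lemma offset_add_nat (o : Fin (n + 1)) (a b : ℕ) :
    o + ((a : ℕ) : Fin (n + 1)) + ((b : ℕ) : Fin (n + 1)) = o + (((a + b : ℕ)) : Fin (n + 1)) := by
  push_cast
  ring

end RectPolygon
namespace RectPolygon
open Fin.NatCast Fin.CommRing

open NiceChain

variable {n : ℕ} {P : RectPolygon n}

lemma leftmost_unique (hP : P.Nice) {r0 : Fin (n + 1)} (hr0 : P.RightmostEdge r0)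
    {e1 e2 : Fin (n + 1)} (he1 : P.LeftmostEdge e1) (he2 : P.LeftmostEdge e2) : e1 = e2 := by
  classical
  obtain ⟨rm, hrmmem, hrmmin⟩ := Finset.exists_min_image
    (Finset.univ.filter fun i => P.RightmostEdge i) (fun i => (P.v i).1)
    ⟨r0, Finset.mem_filter.2 ⟨Finset.mem_univ _, hr0⟩⟩
  have hrm : P.RightmostEdge rm := (Finset.mem_filter.1 hrmmem).2
  have hmin : ∀ j, P.RightmostEdge j → (P.v rm).1 ≤ (P.v j).1 := fun j hj =>
    hrmmin j (Finset.mem_filter.2 ⟨Finset.mem_univ _, hj⟩)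
  -- walk backwards from rm through rightward edges to a leftmost edge lm
  obtain ⟨D1, hD1a, hD1n, hlm', hSrun'⟩ := walk_bwd_R hP hrm.2.1 hrm.2.2
  set A := 2 * D1 with hAdef
  have hlm_eq : (rm - 1) - ((2 * D1 - 1 : ℕ) : Fin (n + 1)) = rm - ((A : ℕ) : Fin (n + 1)) := by
    rw [sub_right_comm, cast_sub_succ, show 2 * D1 - 1 + 1 = A by omega]
  set lm := rm - ((A : ℕ) : Fin (n + 1)) with hlmdef
  rw [hlm_eq] at hlm'
  have hlm : P.LeftmostEdge lm := hlm'
  have hrm_eq : rm = lm + ((A : ℕ) : Fin (n + 1)) := by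
    rw [hlmdef, sub_add_cancel]
  have hSrun : ∀ c : ℕ, 1 ≤ c → c < A → ¬ P.Leftward (lm + ((c : ℕ) : Fin (n + 1))) := by
    intro c h1 h2
    have hkey : lm + ((c : ℕ) : Fin (n + 1)) = (rm - 1) - ((A - 1 - c : ℕ) : Fin (n + 1)) := by
      rw [sub_right_comm, cast_sub_succ, show A - 1 - c + 1 = A - c by omega,
        offset_sub rm (by omega : c ≤ A), ← hlmdef]
    rw [hkey]
    exact hSrun' (A - 1 - c) (by omega)
  -- walk forwards from rm through leftward edges to a leftmost edge lm1
  obtain ⟨D2, hD2a, hD2n, hlm1', hWrun'⟩ := walk_fwd_L hP hrm.2.2 hrm.2.1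
  have hlm1_eq : (rm + 1) + ((2 * D2 - 1 : ℕ) : Fin (n + 1)) = rm + ((2 * D2 : ℕ) : Fin (n + 1)) := by
    rw [add_right_comm, cast_succ, show 2 * D2 - 1 + 1 = 2 * D2 by omega]
  set lm1 := rm + ((2 * D2 : ℕ) : Fin (n + 1)) with hlm1def
  rw [hlm1_eq] at hlm1'
  have hlm1 : P.LeftmostEdge lm1 := hlm1'
  have hWrun : ∀ c : ℕ, 1 ≤ c → c < 2 * D2 → ¬ P.Rightward (rm + ((c : ℕ) : Fin (n + 1))) := by
    intro c h1 h2
    have hkey : rm + ((c : ℕ) : Fin (n + 1)) = (rm + 1) + ((c - 1 : ℕ) : Fin (n + 1)) := by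
      rw [add_right_comm, cast_succ, show c - 1 + 1 = c by omega]
    rw [hkey]
    exact hWrun' (c - 1) (by omega)
  rcases lt_trichotomy (A + 2 * D2) (n + 1) with hBlt | hBeq | hBgt
  · -- lm1 ≠ lm : the hard geometric case
    exfalso
    set B := A + 2 * D2 with hBdef
    have hBn : B ≤ n := by omega
    have hlm1_off : lm1 = lm + ((B : ℕ) : Fin (n + 1)) := by
      rw [hlm1def, hrm_eq, offset_add_nat]
    have hBne : B ≤ n - 1 := by
      rcases Nat.lt_or_ge B n with h | h
      · omega
      · exfalso
        have hBn' : B = n := by omega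
        have h1 : lm1 + 1 = lm := by
          rw [hlm1_off, cast_succ, hBn']
          simp
        have h2 : lm1 = lm - 1 := by
          rw [← h1, add_sub_cancel_right]
        have := hlm.2.1
        rw [← h2] at this
        exact not_left_of_vert hlm1.1.1 this
    -- ===== the geometric contradiction =====
    have hA2 : 2 ≤ A := by omega
    -- chain S (from lm+1 forward to rm)
    have hSrunn : ∀ d : ℕ, d < A - 1 → ¬ P.Leftward ((lm + 1) + ((d : ℕ) : Fin (n + 1))) := by
      intro d hd
      rw [succ_offset]
      exact hSrun (d + 1) (by omega) (by omega)
    have hSchain : IsChain (P.fchain (lm + 1)) (A - 1) := fwd_isChain _ _ hSrunn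
    have hKS : 1 ≤ A - 1 := by omega
    have hS0 : P.fchain (lm + 1) 0 = P.v (lm + 1) := by simp [fchain]
    have hidxSK : (lm + 1) + ((A - 1 : ℕ) : Fin (n + 1)) = rm := by
      rw [succ_offset, show A - 1 + 1 = A by omega, ← hrm_eq]
    have hSK : P.fchain (lm + 1) (A - 1) = P.v rm := by
      rw [fchain_apply, hidxSK]
    have hxlm : (P.v lm).1 = (P.v (lm + 1)).1 := hlm.1.1
    have hxlm1 : (P.v lm1).1 = (P.v (lm1 + 1)).1 := hlm1.1.1
    have hxrm : (P.v rm).1 = (P.v (rm + 1)).1 := hrm.1.1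
    have hμρ : (P.v lm).1 ≤ (P.v rm).1 := by
      have h := hSchain.x_le (Nat.zero_le (A - 1)) le_rfl
      rw [hS0, hSK] at h
      rw [hxlm]
      exact h
    -- chain W (from lm1 backward to rm+1)
    have hWrunn : ∀ d : ℕ, d < 2 * D2 - 1 →
        ¬ P.Rightward (lm1 - (((d + 1 : ℕ)) : Fin (n + 1))) := by
      intro d hd
      have h1 : lm1 - (((d + 1 : ℕ)) : Fin (n + 1)) =
          rm + ((2 * D2 - (d + 1) : ℕ) : Fin (n + 1)) := by
        rw [hlm1def, add_offset_sub rm (by omega)]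
      rw [h1]
      exact hWrun (2 * D2 - (d + 1)) (by omega) (by omega)
    have hWchain : IsChain (P.bchain lm1) (2 * D2 - 1) := bwd_isChain _ _ hWrunn
    have hKW : 1 ≤ 2 * D2 - 1 := by omega
    have hW0 : P.bchain lm1 0 = P.v lm1 := by simp [bchain]
    have hidxWK : lm1 - ((2 * D2 - 1 : ℕ) : Fin (n + 1)) = rm + 1 := by
      rw [hlm1def, add_offset_sub rm (by omega), show 2 * D2 - (2 * D2 - 1) = 1 by omega]
      norm_num
    have hWK : P.bchain lm1 (2 * D2 - 1) = P.v (rm + 1) := by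
      rw [bchain_apply, hidxWK]
    have hνρ : (P.v lm1).1 ≤ (P.v rm).1 := by
      have h := hWchain.x_le (Nat.zero_le _) le_rfl
      rw [hW0, hWK] at h
      rw [hxrm]
      exact h
    -- memberships of key vertices
    have hmem_rm_S : ((P.v rm).1, (P.v rm).2) ∈ chainSet (P.fchain (lm + 1)) (A - 1) := by
      rw [Prod.mk.eta, ← hSK]
      exact vertex_mem_chain hKS le_rfl
    have hmem_lm1_S0 : ((P.v lm).1, (P.v (lm + 1)).2) ∈
        chainSet (P.fchain (lm + 1)) (A - 1) := by
      have hp : ((P.v lm).1, (P.v (lm + 1)).2) = P.v (lm + 1) := Prod.ext hxlm rfl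
      rw [hp, ← hS0]
      exact vertex_mem_chain hKS (Nat.zero_le _)
    have hmem_rm1_W : ((P.v rm).1, (P.v (rm + 1)).2) ∈
        chainSet (P.bchain lm1) (2 * D2 - 1) := by
      have hp : ((P.v rm).1, (P.v (rm + 1)).2) = P.v (rm + 1) := Prod.ext hxrm rfl
      rw [hp, ← hWK]
      exact vertex_mem_chain hKW le_rfl
    have hmem_lm1_W : ((P.v lm1).1, (P.v lm1).2) ∈ chainSet (P.bchain lm1) (2 * D2 - 1) := by
      rw [Prod.mk.eta, ← hW0]
      exact vertex_mem_chain hKW (Nat.zero_le _)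
    -- disjointness of W and S
    have hdisjWS : ∀ p ∈ chainSet (P.bchain lm1) (2 * D2 - 1),
        p ∉ chainSet (P.fchain (lm + 1)) (A - 1) := by
      intro p hp hq
      obtain ⟨d, hd, hpe⟩ := (bwd_mem_iff lm1 (2 * D2 - 1)).1 hp
      obtain ⟨d', hd', hqe⟩ := (fwd_mem_iff (lm + 1) (A - 1)).1 hq
      rw [show lm1 - (((d + 1 : ℕ)) : Fin (n + 1)) =
          lm + ((B - (d + 1) : ℕ) : Fin (n + 1)) from by
        rw [hlm1_off, add_offset_sub lm (by omega)]] at hpe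
      rw [succ_offset] at hqe
      exact edge_disjoint_offsets lm (a := B - (d + 1)) (b := d' + 1) (by omega) (by omega)
        (by omega) (by omega) (by omega) (by omega) (by omega) p hpe hqe
    -- W lies below S on the common span
    have hWbelowS : ∀ x : ℝ, (P.v lm).1 ≤ x → (P.v lm1).1 ≤ x → x ≤ (P.v rm).1 →
        ∀ a b : ℝ, (x, a) ∈ chainSet (P.bchain lm1) (2 * D2 - 1) →
          (x, b) ∈ chainSet (P.fchain (lm + 1)) (A - 1) → a < b := by
      intro x h1 h2 h3 a b ha hb
      refine chain_below hWchain hSchain hKW hKS hdisjWS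
        (ξ := (P.v rm).1) (x := x) ?_ ?_ ?_ ?_
        ⟨(P.v (rm + 1)).2, (P.v rm).2, hmem_rm1_W, hmem_rm_S, hrm.1.2⟩ ha hb
      · rw [hW0]; exact le_min hνρ h2
      · rw [hWK, ← hxrm]; exact max_le le_rfl h3
      · rw [hS0, ← hxlm]; exact le_min hμρ h1
      · rw [hSK]; exact max_le le_rfl h3
    rcases le_or_gt (P.v lm).1 (P.v lm1).1 with hμν | hνμ
    · -- case ν ≥ μ : use the next rising chain S1 after lm1
      obtain ⟨D3, hD3a, hD3n, hrm1', hS1run⟩ := walk_fwd_R hP hlm1.2.2 hrm.2.2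
      have hrm1_eq : (lm1 + 1) + ((2 * D3 - 1 : ℕ) : Fin (n + 1)) =
          lm1 + ((2 * D3 : ℕ) : Fin (n + 1)) := by
        rw [add_right_comm, cast_succ, show 2 * D3 - 1 + 1 = 2 * D3 by omega]
      rw [hrm1_eq] at hrm1'
      have hn1 : lm + ((n : ℕ) : Fin (n + 1)) + 1 = lm := by
        rw [cast_succ]
        simp
      have hlmn : lm + ((n : ℕ) : Fin (n + 1)) = lm - 1 := by
        rw [eq_sub_iff_add_eq]
        exact hn1
      have hC : B + 2 * D3 ≤ n - 1 := by
        rcases Nat.lt_or_ge (B + 2 * D3) n with h | h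
        · omega
        · exfalso
          have hlmm1 : lm - 1 = lm1 + ((n - B : ℕ) : Fin (n + 1)) := by
            rw [hlm1_off, offset_add_nat, show B + (n - B) = n by omega, hlmn]
          rcases Nat.lt_or_ge (n - B) (2 * D3) with hlt | hge
          · have hidx : lm - 1 = (lm1 + 1) + ((n - B - 1 : ℕ) : Fin (n + 1)) := by
              rw [succ_offset, show n - B - 1 + 1 = n - B by omega]
              exact hlmm1
            have hnl := hS1run (n - B - 1) (by omega)
            rw [← hidx] at hnl
            exact hnl hlm.2.1
          · have hnB : n - B = 2 * D3 := by omega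
            have hre : lm - 1 = lm1 + ((2 * D3 : ℕ) : Fin (n + 1)) := by
              rw [← hnB]; exact hlmm1
            have hv := hrm1'.1.1
            rw [← hre] at hv
            exact not_left_of_vert hv hlm.2.1
      have hrm1_off : lm1 + ((2 * D3 : ℕ) : Fin (n + 1)) =
          lm + ((B + 2 * D3 : ℕ) : Fin (n + 1)) := by
        rw [hlm1_off, offset_add_nat]
      have hrm1 : P.RightmostEdge (lm + ((B + 2 * D3 : ℕ) : Fin (n + 1))) := by
        rw [← hrm1_off]; exact hrm1'
      -- S1 chain
      have hS1chain : IsChain (P.fchain (lm1 + 1)) (2 * D3 - 1) := fwd_isChain _ _ hS1run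
      have hKS1 : 1 ≤ 2 * D3 - 1 := by omega
      have hS10 : P.fchain (lm1 + 1) 0 = P.v (lm1 + 1) := by simp [fchain]
      have hS1K : P.fchain (lm1 + 1) (2 * D3 - 1) =
          P.v (lm + ((B + 2 * D3 : ℕ) : Fin (n + 1))) := by
        rw [fchain_apply, hrm1_eq, hrm1_off]
      have hρρ1 : (P.v rm).1 ≤ (P.v (lm + ((B + 2 * D3 : ℕ) : Fin (n + 1)))).1 := hmin _ hrm1
      have hS1off : ∀ d : ℕ, (lm1 + 1) + ((d : ℕ) : Fin (n + 1)) =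
          lm + ((B + (d + 1) : ℕ) : Fin (n + 1)) := by
        intro d
        rw [succ_offset, hlm1_off, offset_add_nat]
      have hdisjS1S : ∀ p ∈ chainSet (P.fchain (lm1 + 1)) (2 * D3 - 1),
          p ∉ chainSet (P.fchain (lm + 1)) (A - 1) := by
        intro p hp hq
        obtain ⟨d, hd, hpe⟩ := (fwd_mem_iff _ _).1 hp
        obtain ⟨d', hd', hqe⟩ := (fwd_mem_iff _ _).1 hq
        rw [hS1off] at hpe
        rw [succ_offset] at hqe
        exact edge_disjoint_offsets lm (a := B + (d + 1)) (b := d' + 1) (by omega) (by omega)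
          (by omega) (by omega) (by omega) (by omega) (by omega) p hpe hqe
      have hdisjWS1 : ∀ p ∈ chainSet (P.bchain lm1) (2 * D2 - 1),
          p ∉ chainSet (P.fchain (lm1 + 1)) (2 * D3 - 1) := by
        intro p hp hq
        obtain ⟨d, hd, hpe⟩ := (bwd_mem_iff _ _).1 hp
        obtain ⟨d', hd', hqe⟩ := (fwd_mem_iff _ _).1 hq
        rw [show lm1 - (((d + 1 : ℕ)) : Fin (n + 1)) =
            lm + ((B - (d + 1) : ℕ) : Fin (n + 1)) from by
          rw [hlm1_off, add_offset_sub lm (by omega)]] at hpe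
        rw [hS1off] at hqe
        exact edge_disjoint_offsets lm (a := B - (d + 1)) (b := B + (d' + 1)) (by omega)
          (by omega) (by omega) (by omega) (by omega) (by omega) (by omega) p hpe hqe
      have hS1avoid_rm : ∀ p ∈ chainSet (P.fchain (lm1 + 1)) (2 * D3 - 1),
          p ∉ P.edge rm := by
        intro p hp hq
        obtain ⟨d, hd, hpe⟩ := (fwd_mem_iff _ _).1 hp
        rw [hS1off] at hpe
        rw [show rm = lm + ((A : ℕ) : Fin (n + 1)) from hrm_eq] at hq
        exact edge_disjoint_offsets lm (a := B + (d + 1)) (b := A) (by omega) (by omega)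
          (by omega) (by omega) (by omega) (by omega) (by omega) p hpe hq
      have hSavoid_lm1 : ∀ p ∈ chainSet (P.fchain (lm + 1)) (A - 1), p ∉ P.edge lm1 := by
        intro p hp hq
        obtain ⟨d, hd, hpe⟩ := (fwd_mem_iff _ _).1 hp
        rw [succ_offset] at hpe
        rw [show lm1 = lm + ((B : ℕ) : Fin (n + 1)) from hlm1_off] at hq
        exact edge_disjoint_offsets lm (a := d + 1) (b := B) (by omega) (by omega)
          (by omega) (by omega) (by omega) (by omega) (by omega) p hpe hq
      have hmem_lm1p_S1 : ((P.v lm1).1, (P.v (lm1 + 1)).2) ∈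
          chainSet (P.fchain (lm1 + 1)) (2 * D3 - 1) := by
        have hp : ((P.v lm1).1, (P.v (lm1 + 1)).2) = P.v (lm1 + 1) := Prod.ext hxlm1 rfl
        rw [hp, ← hS10]
        exact vertex_mem_chain hKS1 (Nat.zero_le _)
      -- W lies below S1
      have hWbelowS1 : ∀ a b : ℝ, ((P.v rm).1, a) ∈ chainSet (P.bchain lm1) (2 * D2 - 1) →
          ((P.v rm).1, b) ∈ chainSet (P.fchain (lm1 + 1)) (2 * D3 - 1) → a < b := by
        intro a b ha hb
        refine chain_below hWchain hS1chain hKW hKS1 hdisjWS1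
          (ξ := (P.v lm1).1) (x := (P.v rm).1) ?_ ?_ ?_ ?_
          ⟨(P.v lm1).2, (P.v (lm1 + 1)).2, hmem_lm1_W, hmem_lm1p_S1, hlm1.1.2⟩ ha hb
        · rw [hW0]; exact le_min le_rfl hνρ
        · rw [hWK, ← hxrm]; exact max_le hνρ le_rfl
        · rw [hS10, ← hxlm1]; exact le_min le_rfl hνρ
        · rw [hS1K]; exact max_le (hνρ.trans hρρ1) hρρ1
      -- a point of S above the top of lm1
      obtain ⟨s, hs⟩ := chain_slice_nonempty hSchain hKS (x := (P.v lm1).1)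
        (by rw [hS0, ← hxlm]; exact hμν) (by rw [hSK]; exact hνρ)
      have hα1s : (P.v lm1).2 < s := hWbelowS (P.v lm1).1 hμν le_rfl hνρ _ _ hmem_lm1_W hs
      have hsgt : (P.v (lm1 + 1)).2 < s := by
        by_contra hcon
        push_neg at hcon
        have hmem : ((P.v lm1).1, s) ∈ P.edge lm1 := by
          refine vert_mem_edge hlm1.1.1 ?_ ?_
          · rw [min_eq_left hlm1.1.2.le]; exact hα1s.le
          · rw [max_eq_right hlm1.1.2.le]; exact hcon
        exact hSavoid_lm1 _ hs hmem
      -- S1 lies below S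
      have hS1belowS : ∀ a b : ℝ, ((P.v rm).1, a) ∈ chainSet (P.fchain (lm1 + 1)) (2 * D3 - 1) →
          ((P.v rm).1, b) ∈ chainSet (P.fchain (lm + 1)) (A - 1) → a < b := by
        intro a b ha hb
        refine chain_below hS1chain hSchain hKS1 hKS hdisjS1S
          (ξ := (P.v lm1).1) (x := (P.v rm).1) ?_ ?_ ?_ ?_
          ⟨(P.v (lm1 + 1)).2, s, hmem_lm1p_S1, hs, hsgt⟩ ha hb
        · rw [hS10, ← hxlm1]; exact le_min le_rfl hνρ
        · rw [hS1K]; exact max_le (hνρ.trans hρρ1) hρρ1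
        · rw [hS0, ← hxlm]; exact le_min hμν (hμν.trans hνρ)
        · rw [hSK]; exact max_le hνρ le_rfl
      -- final contradiction at x = x(rm)
      obtain ⟨jy, hjy⟩ := chain_slice_nonempty hS1chain hKS1 (x := (P.v rm).1)
        (by rw [hS10, ← hxlm1]; exact hνρ) (by rw [hS1K]; exact hρρ1)
      have h1 := hWbelowS1 _ _ hmem_rm1_W hjy
      have h2 := hS1belowS _ _ hjy hmem_rm_S
      have hmem : ((P.v rm).1, jy) ∈ P.edge rm := by
        refine vert_mem_edge hrm.1.1 ?_ ?_
        · rw [min_eq_right hrm.1.2.le]; exact h1.le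
        · rw [max_eq_left hrm.1.2.le]; exact h2.le
      exact hS1avoid_rm _ hjy hmem
    · -- case ν < μ : use the falling chain W2 before lm
      obtain ⟨D4, hD4a, hD4n, hrm2', hW2run'⟩ := walk_bwd_L hP hlm.2.1 hlm.2.2
      have hrm2_eq : (lm - 1) - ((2 * D4 - 1 : ℕ) : Fin (n + 1)) =
          lm - ((2 * D4 : ℕ) : Fin (n + 1)) := by
        rw [sub_right_comm, cast_sub_succ, show 2 * D4 - 1 + 1 = 2 * D4 by omega]
      rw [hrm2_eq] at hrm2'
      have hW2run : ∀ d : ℕ, d < 2 * D4 - 1 →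
          ¬ P.Rightward (lm - (((d + 1 : ℕ)) : Fin (n + 1))) := by
        intro d hd
        rw [sub_succ_comm lm d]
        exact hW2run' d hd
      have hE : 2 * D4 ≤ n - B := by
        rcases Nat.lt_or_ge (2 * D4) (n + 1 - B) with h | h
        · omega
        · exfalso
          have hlm1_sub : lm1 = lm - ((n + 1 - B : ℕ) : Fin (n + 1)) := by
            rw [sub_coe_eq_add lm (by omega), show n + 1 - (n + 1 - B) = B by omega]
            exact hlm1_off
          rcases Nat.eq_or_lt_of_le h with heq | hlt
          · have hre : lm1 = lm - ((2 * D4 : ℕ) : Fin (n + 1)) := by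
              rw [← heq]; exact hlm1_sub
            have hu := hlm1.1.2
            have hd := hrm2'.1.2
            rw [← hre] at hd
            linarith
          · have hstep : lm1 + 1 = lm - ((n - B : ℕ) : Fin (n + 1)) := by
              have hc : lm - ((n - B : ℕ) : Fin (n + 1)) - 1 =
                  lm - ((n + 1 - B : ℕ) : Fin (n + 1)) := by
                rw [cast_sub_succ, show n - B + 1 = n + 1 - B by omega]
              rw [hlm1_sub, ← hc, sub_add_cancel]
            have hr := hlm1.2.2
            rw [hstep, show (n - B : ℕ) = (n - B - 1) + 1 by omega] at hr
            exact hW2run (n - B - 1) (by omega) hr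
      -- W2 chain
      have hW2chain : IsChain (P.bchain lm) (2 * D4 - 1) := bwd_isChain _ _ hW2run
      have hKW2 : 1 ≤ 2 * D4 - 1 := by omega
      have hW20 : P.bchain lm 0 = P.v lm := by simp [bchain]
      have hidxW2K : lm - ((2 * D4 - 1 : ℕ) : Fin (n + 1)) =
          lm - ((2 * D4 : ℕ) : Fin (n + 1)) + 1 := by
        rw [← sub_eq_iff_eq_add]
        rw [cast_sub_succ, show 2 * D4 - 1 + 1 = 2 * D4 by omega]
      have hW2K : P.bchain lm (2 * D4 - 1) =
          P.v (lm - ((2 * D4 : ℕ) : Fin (n + 1)) + 1) := by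
        rw [bchain_apply, hidxW2K]
      have hxrm2 : (P.v (lm - ((2 * D4 : ℕ) : Fin (n + 1)))).1 =
          (P.v (lm - ((2 * D4 : ℕ) : Fin (n + 1)) + 1)).1 := hrm2'.1.1
      have hρρ2 : (P.v rm).1 ≤ (P.v (lm - ((2 * D4 : ℕ) : Fin (n + 1)))).1 := hmin _ hrm2'
      have hW2off : ∀ d : ℕ, d + 1 ≤ n → lm - (((d + 1 : ℕ)) : Fin (n + 1)) =
          lm + ((n - d : ℕ) : Fin (n + 1)) := by
        intro d hd
        rw [sub_coe_eq_add lm (by omega), show n + 1 - (d + 1) = n - d by omega]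
      have hdisjW2S : ∀ p ∈ chainSet (P.bchain lm) (2 * D4 - 1),
          p ∉ chainSet (P.fchain (lm + 1)) (A - 1) := by
        intro p hp hq
        obtain ⟨d, hd, hpe⟩ := (bwd_mem_iff _ _).1 hp
        obtain ⟨d', hd', hqe⟩ := (fwd_mem_iff _ _).1 hq
        rw [hW2off d (by omega)] at hpe
        rw [succ_offset] at hqe
        exact edge_disjoint_offsets lm (a := n - d) (b := d' + 1) (by omega) (by omega)
          (by omega) (by omega) (by omega) (by omega) (by omega) p hpe hqe
      have hdisjW2W : ∀ p ∈ chainSet (P.bchain lm) (2 * D4 - 1),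
          p ∉ chainSet (P.bchain lm1) (2 * D2 - 1) := by
        intro p hp hq
        obtain ⟨d, hd, hpe⟩ := (bwd_mem_iff _ _).1 hp
        obtain ⟨d', hd', hqe⟩ := (bwd_mem_iff _ _).1 hq
        rw [hW2off d (by omega)] at hpe
        rw [show lm1 - (((d' + 1 : ℕ)) : Fin (n + 1)) =
            lm + ((B - (d' + 1) : ℕ) : Fin (n + 1)) from by
          rw [hlm1_off, add_offset_sub lm (by omega)]] at hqe
        exact edge_disjoint_offsets lm (a := n - d) (b := B - (d' + 1)) (by omega) (by omega)
          (by omega) (by omega) (by omega) (by omega) (by omega) p hpe hqe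
      have hW2avoid_rm : ∀ p ∈ chainSet (P.bchain lm) (2 * D4 - 1), p ∉ P.edge rm := by
        intro p hp hq
        obtain ⟨d, hd, hpe⟩ := (bwd_mem_iff _ _).1 hp
        rw [hW2off d (by omega)] at hpe
        rw [show rm = lm + ((A : ℕ) : Fin (n + 1)) from hrm_eq] at hq
        exact edge_disjoint_offsets lm (a := n - d) (b := A) (by omega) (by omega)
          (by omega) (by omega) (by omega) (by omega) (by omega) p hpe hq
      have hWavoid_lm : ∀ p ∈ chainSet (P.bchain lm1) (2 * D2 - 1), p ∉ P.edge lm := by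
        intro p hp hq
        obtain ⟨d, hd, hpe⟩ := (bwd_mem_iff _ _).1 hp
        rw [show lm1 - (((d + 1 : ℕ)) : Fin (n + 1)) =
            lm + ((B - (d + 1) : ℕ) : Fin (n + 1)) from by
          rw [hlm1_off, add_offset_sub lm (by omega)]] at hpe
        rw [show lm = lm + ((0 : ℕ) : Fin (n + 1)) from by simp] at hq
        exact edge_disjoint_offsets lm (a := B - (d + 1)) (b := 0) (by omega) (by omega)
          (by omega) (by omega) (by omega) (by omega) (by omega) p hpe hq
      have hmem_lm_W2 : ((P.v lm).1, (P.v lm).2) ∈ chainSet (P.bchain lm) (2 * D4 - 1) := by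
        rw [Prod.mk.eta, ← hW20]
        exact vertex_mem_chain hKW2 (Nat.zero_le _)
      -- W2 lies below S
      have hW2belowS : ∀ a b : ℝ, ((P.v rm).1, a) ∈ chainSet (P.bchain lm) (2 * D4 - 1) →
          ((P.v rm).1, b) ∈ chainSet (P.fchain (lm + 1)) (A - 1) → a < b := by
        intro a b ha hb
        refine chain_below hW2chain hSchain hKW2 hKS hdisjW2S
          (ξ := (P.v lm).1) (x := (P.v rm).1) ?_ ?_ ?_ ?_
          ⟨(P.v lm).2, (P.v (lm + 1)).2, hmem_lm_W2, hmem_lm1_S0, hlm.1.2⟩ ha hb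
        · rw [hW20]; exact le_min le_rfl hμρ
        · rw [hW2K, ← hxrm2]; exact max_le (hμρ.trans hρρ2) hρρ2
        · rw [hS0, ← hxlm]; exact le_min le_rfl hμρ
        · rw [hSK]; exact max_le hμρ le_rfl
      obtain ⟨w2, hw2⟩ := chain_slice_nonempty hW2chain hKW2 (x := (P.v rm).1)
        (by rw [hW20]; exact hμρ) (by rw [hW2K, ← hxrm2]; exact hρρ2)
      have hw2β : w2 < (P.v rm).2 := hW2belowS _ _ hw2 hmem_rm_S
      have hw2β' : w2 < (P.v (rm + 1)).2 := by
        by_contra hcon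
        push_neg at hcon
        have hmem : ((P.v rm).1, w2) ∈ P.edge rm := by
          refine vert_mem_edge hrm.1.1 ?_ ?_
          · rw [min_eq_right hrm.1.2.le]; exact hcon
          · rw [max_eq_left hrm.1.2.le]; exact hw2β.le
        exact hW2avoid_rm _ hw2 hmem
      -- W2 lies below W
      have hW2belowW : ∀ a b : ℝ, ((P.v lm).1, a) ∈ chainSet (P.bchain lm) (2 * D4 - 1) →
          ((P.v lm).1, b) ∈ chainSet (P.bchain lm1) (2 * D2 - 1) → a < b := by
        intro a b ha hb
        refine chain_below hW2chain hWchain hKW2 hKW hdisjW2W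
          (ξ := (P.v rm).1) (x := (P.v lm).1) ?_ ?_ ?_ ?_
          ⟨w2, (P.v (rm + 1)).2, hw2, hmem_rm1_W, hw2β'⟩ ha hb
        · rw [hW20]; exact le_min hμρ le_rfl
        · rw [hW2K, ← hxrm2]; exact max_le hρρ2 (hμρ.trans hρρ2)
        · rw [hW0]; exact le_min hνρ hνμ.le
        · rw [hWK, ← hxrm]; exact max_le le_rfl hμρ
      obtain ⟨w, hw⟩ := chain_slice_nonempty hWchain hKW (x := (P.v lm).1)
        (by rw [hW0]; exact hνμ.le) (by rw [hWK, ← hxrm]; exact hμρ)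
      have h1 : (P.v lm).2 < w := hW2belowW _ _ hmem_lm_W2 hw
      have h2 : w < (P.v (lm + 1)).2 :=
        hWbelowS (P.v lm).1 le_rfl hνμ.le hμρ _ _ hw hmem_lm1_S0
      have hmem : ((P.v lm).1, w) ∈ P.edge lm := by
        refine vert_mem_edge hlm.1.1 ?_ ?_
        · rw [min_eq_left hlm.1.2.le]; exact h1.le
        · rw [max_eq_right hlm.1.2.le]; exact h2.le
      exact hWavoid_lm _ hw hmem

  · -- closed cycle : lm is the unique leftmost edge
    have Hcov : ∀ e, P.LeftmostEdge e → e = lm := by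
      intro e he
      set oe := cpos lm e with hoedef
      have hoe_le : oe ≤ n := cpos_le_n
      have he_eq : e = lm + ((oe : ℕ) : Fin (n + 1)) := (add_cpos lm e).symm
      rcases Nat.eq_zero_or_pos oe with h0 | h1
      · rw [he_eq, h0]
        simp
      exfalso
      rcases Nat.lt_or_ge oe A with hltA | hgeA
      · -- S side
        have hm1 : e - 1 = lm + ((oe - 1 : ℕ) : Fin (n + 1)) := by
          rw [sub_eq_iff_eq_add, he_eq, cast_succ, show oe - 1 + 1 = oe by omega]
        have hLeft := he.2.1
        rw [hm1] at hLeft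
        rcases Nat.eq_or_lt_of_le h1 with h1' | h1'
        · rw [show oe - 1 = 0 by omega] at hLeft
          simp only [Nat.cast_zero, add_zero] at hLeft
          exact not_left_of_vert hlm.1.1 hLeft
        · exact hSrun (oe - 1) (by omega) (by omega) hLeft
      rcases Nat.eq_or_lt_of_le hgeA with hA | hgtA
      · -- e = rm
        have herm : e = rm := by rw [he_eq, ← hA, hrm_eq]
        have hu := he.1.2
        have hd := hrm.1.2
        rw [herm] at hu
        linarith
      · -- W side
        have hp1 : e + 1 = lm + ((oe + 1 : ℕ) : Fin (n + 1)) := by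
          rw [he_eq, cast_succ]
        have hRight := he.2.2
        rcases Nat.eq_or_lt_of_le hoe_le with hn | hn
        · -- oe = n : e + 1 = lm
          have : e + 1 = lm := by
            rw [hp1, hn]
            simp
          rw [this] at hRight
          exact not_right_of_vert hlm.1.1 hRight
        · -- oe + 1 ≤ n : inside W
          have hc : lm + ((oe + 1 : ℕ) : Fin (n + 1)) =
              rm + ((oe + 1 - A : ℕ) : Fin (n + 1)) := by
            rw [hrm_eq, offset_add_nat, show A + (oe + 1 - A) = oe + 1 by omega]
          rw [hp1, hc] at hRight
          exact hWrun (oe + 1 - A) (by omega) (by omega) hRight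
    rw [Hcov e1 he1, Hcov e2 he2]
  · -- wrap-around contradiction
    exfalso
    have hd0 : lm = rm + ((n + 1 - A : ℕ) : Fin (n + 1)) := by
      rw [hlmdef, sub_coe_eq_add rm (by omega)]
    have hlm1p : lm + 1 = rm + ((n + 1 - A + 1 : ℕ) : Fin (n + 1)) := by
      rw [hd0, cast_succ]
    have hRight := hlm.2.2
    rw [hlm1p] at hRight
    rcases Nat.lt_or_ge (n + 1 - A + 1) (2 * D2) with h | h
    · exact hWrun (n + 1 - A + 1) (by omega) h hRight
    · have heq : n + 1 - A + 1 = 2 * D2 := by omega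
      rw [heq] at hRight
      exact not_right_of_vert hlm1.1.1 hRight
end RectPolygon
open Fin.NatCast Fin.CommRing
open RectPolygon in
/-- In a nice hole, traversing the lower boundary `FB(S)` anticlockwise from the unique
leftmost edge `l` to the unique rightmost edge `r`, the edges are visited in
non-decreasing order of `x_min`; the same holds for the upper boundary `FT(S)`
traversed clockwise. -/
theorem nice_hole_boundary_x_sorted {n : ℕ} (P : RectPolygon n) (hP : P.Nice)
    (l r : Fin (n + 1)) (hl : P.LeftmostEdge l) (hr : P.RightmostEdge r) :
    (∀ a b : Fin (n + 1),
      cpos a l ≤ cpos r l → cpos b l ≤ cpos r l →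
      cpos a l ≤ cpos b l → P.xMinEdge a ≤ P.xMinEdge b) ∧
    (∀ a b : Fin (n + 1),
      cpos l a ≤ cpos l r → cpos l b ≤ cpos l r →
      cpos l a ≤ cpos l b → P.xMinEdge a ≤ P.xMinEdge b) := by
  classical
  -- walk from l forward through rightward edges to a rightmost edge b
  obtain ⟨D1, hD1a, hD1n, hb', hSrun'⟩ := walk_fwd_R hP hl.2.2 hr.2.2
  have hb_eq : (l + 1) + ((2 * D1 - 1 : ℕ) : Fin (n + 1)) =
      l + ((2 * D1 : ℕ) : Fin (n + 1)) := by
    rw [add_right_comm, cast_succ, show 2 * D1 - 1 + 1 = 2 * D1 by omega]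
  rw [hb_eq] at hb'
  set A := 2 * D1 with hAdef
  have hSrun : ∀ c : ℕ, 1 ≤ c → c < A → ¬ P.Leftward (l + ((c : ℕ) : Fin (n + 1))) := by
    intro c h1 h2
    have hkey : l + ((c : ℕ) : Fin (n + 1)) = (l + 1) + ((c - 1 : ℕ) : Fin (n + 1)) := by
      rw [add_right_comm, cast_succ, show c - 1 + 1 = c by omega]
    rw [hkey]
    exact hSrun' (c - 1) (by omega)
  -- walk from b forward through leftward edges to a leftmost edge, which must be l
  obtain ⟨D2, hD2a, hD2n, hl2', hWrun'⟩ := walk_fwd_L hP hb'.2.2 hl.2.2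
  have hl2_eq : ((l + ((A : ℕ) : Fin (n + 1))) + 1) + ((2 * D2 - 1 : ℕ) : Fin (n + 1)) =
      l + ((A + 2 * D2 : ℕ) : Fin (n + 1)) := by
    rw [add_right_comm, cast_succ, show 2 * D2 - 1 + 1 = 2 * D2 by omega, offset_add_nat]
  rw [hl2_eq] at hl2'
  have hl2eq : l + ((A + 2 * D2 : ℕ) : Fin (n + 1)) = l := leftmost_unique hP hr hl2' hl
  have hB : A + 2 * D2 = n + 1 := by
    rcases Nat.lt_or_ge (A + 2 * D2) (n + 1) with h | h
    · exfalso
      have h0 : cpos l (l + ((A + 2 * D2 : ℕ) : Fin (n + 1))) = A + 2 * D2 :=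
        cpos_add l (by omega)
      rw [hl2eq] at h0
      have h1 : cpos l l = 0 := cpos_eq_zero_iff.2 rfl
      omega
    · have hsplit : ((A + 2 * D2 : ℕ) : Fin (n + 1)) =
          ((A + 2 * D2 - (n + 1) : ℕ) : Fin (n + 1)) := by
        rw [show (A + 2 * D2 : ℕ) = (A + 2 * D2 - (n + 1)) + (n + 1) by omega]
        push_cast
        simp
      have h0 : cpos l (l + ((A + 2 * D2 - (n + 1) : ℕ) : Fin (n + 1))) =
          A + 2 * D2 - (n + 1) := cpos_add l (by omega)
      rw [← hsplit, hl2eq] at h0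
      have h1 : cpos l l = 0 := cpos_eq_zero_iff.2 rfl
      omega
  -- the W-side run, in l-offsets
  have hWrun : ∀ c : ℕ, A + 1 ≤ c → c ≤ n → ¬ P.Rightward (l + ((c : ℕ) : Fin (n + 1))) := by
    intro c h1 h2
    have hkey : l + ((c : ℕ) : Fin (n + 1)) =
        ((l + ((A : ℕ) : Fin (n + 1))) + 1) + ((c - A - 1 : ℕ) : Fin (n + 1)) := by
      rw [add_right_comm, cast_succ, offset_add_nat, show A + (c - A - 1 + 1) = c by omega]
    rw [hkey]
    exact hWrun' (c - A - 1) (by omega)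
  -- r = l + A
  have hr_eq : r = l + ((A : ℕ) : Fin (n + 1)) := by
    have hor_le : cpos l r ≤ n := cpos_le_n
    have hor : r = l + ((cpos l r : ℕ) : Fin (n + 1)) := (add_cpos l r).symm
    set o := cpos l r with hodef
    rcases Nat.eq_zero_or_pos o with h0 | h1
    · exfalso
      rw [h0] at hor
      simp only [Nat.cast_zero, add_zero] at hor
      have hu := hl.1.2
      have hd := hr.1.2
      rw [hor] at hd
      linarith
    rcases Nat.lt_or_ge o A with hoA | hoA
    · exfalso
      have hp1 : r + 1 = l + ((o + 1 : ℕ) : Fin (n + 1)) := by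
        rw [hor, cast_succ]
      have hLeft := hr.2.2
      rw [hp1] at hLeft
      rcases Nat.eq_or_lt_of_le (show o + 1 ≤ A by omega) with he | hlt
      · rw [he] at hLeft
        exact not_left_of_vert hb'.1.1 hLeft
      · exact hSrun (o + 1) (by omega) hlt hLeft
    rcases Nat.eq_or_lt_of_le hoA with he | hgt
    · rw [hor, ← he]
    · exfalso
      have hm1 : r - 1 = l + ((o - 1 : ℕ) : Fin (n + 1)) := by
        rw [sub_eq_iff_eq_add, hor, cast_succ, show o - 1 + 1 = o by omega]
      have hRight := hr.2.1
      rw [hm1] at hRight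
      rcases Nat.eq_or_lt_of_le (show A ≤ o - 1 by omega) with he | hlt
      · rw [← he] at hRight
        exact not_right_of_vert hb'.1.1 hRight
      · exact hWrun (o - 1) (by omega) (by omega) hRight
  -- top-side monotonicity
  have hTstep : ∀ c : ℕ, c ≤ A →
      (P.v (l + ((c : ℕ) : Fin (n + 1)))).1 ≤ (P.v (l + ((c : ℕ) : Fin (n + 1)) + 1)).1 := by
    intro c hc
    rcases Nat.eq_zero_or_pos c with rfl | h1
    · simp only [Nat.cast_zero, add_zero]
      exact le_of_eq hl.1.1
    rcases Nat.eq_or_lt_of_le hc with he | h2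
    · rw [← he] at hr_eq
      rw [← hr_eq]
      exact le_of_eq hr.1.1
    · exact x_le_succ (hSrun c h1 h2)
  have hTmono : ∀ k : ℕ, k ≤ A → ∀ j : ℕ, j ≤ k →
      (P.v (l + ((j : ℕ) : Fin (n + 1)))).1 ≤ (P.v (l + ((k : ℕ) : Fin (n + 1)))).1 := by
    intro k
    induction k with
    | zero =>
      intro _ j hj
      rw [show j = 0 by omega]
    | succ k ih =>
      intro hk j hj
      rcases Nat.eq_or_lt_of_le hj with rfl | hlt
      · exact le_rfl
      · refine (ih (by omega) j (by omega)).trans ?_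
        have := hTstep k (by omega)
        rwa [cast_succ] at this
  -- bottom-side monotonicity
  have hBstep : ∀ c : ℕ, 1 ≤ c → c ≤ n + 1 - A →
      (P.v ((l - ((c : ℕ) : Fin (n + 1))) + 1)).1 ≤ (P.v (l - ((c : ℕ) : Fin (n + 1)))).1 := by
    intro c h1 h2
    have hoff : l - ((c : ℕ) : Fin (n + 1)) = l + ((n + 1 - c : ℕ) : Fin (n + 1)) :=
      sub_coe_eq_add l (by omega)
    rw [hoff]
    rcases Nat.eq_or_lt_of_le (show A ≤ n + 1 - c by omega) with he | hlt
    · rw [← he, ← hr_eq]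
      exact le_of_eq hr.1.1.symm
    · exact x_succ_le (hWrun (n + 1 - c) (by omega) (by omega))
  have hBmono : ∀ k : ℕ, k ≤ n + 1 - A → ∀ j : ℕ, j ≤ k →
      (P.v (l - ((j : ℕ) : Fin (n + 1)))).1 ≤ (P.v (l - ((k : ℕ) : Fin (n + 1)))).1 := by
    intro k
    induction k with
    | zero =>
      intro _ j hj
      rw [show j = 0 by omega]
    | succ k ih =>
      intro hk j hj
      rcases Nat.eq_or_lt_of_le hj with rfl | hlt
      · exact le_rfl
      · refine (ih (by omega) j (by omega)).trans ?_
        have h3 := hBstep (k + 1) (by omega) hk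
        rwa [show (l - (((k + 1 : ℕ)) : Fin (n + 1))) + 1 = l - ((k : ℕ) : Fin (n + 1)) from by
          rw [← cast_sub_succ, sub_add_cancel]] at h3
  -- cpos values
  have hcplr : cpos l r = A := by
    rw [hr_eq]
    exact cpos_add l (by omega)
  have hcprl : cpos r l = n + 1 - A := by
    have hlr : l = r + ((n + 1 - A : ℕ) : Fin (n + 1)) := by
      rw [← sub_coe_eq_add r (by omega), hr_eq, add_sub_cancel_right]
    rw [hlr] at hr_eq ⊢
    exact cpos_add r (by omega)
  constructor
  · -- bottom boundary
    intro a b ha hb hab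
    have haeq : a = l - ((cpos a l : ℕ) : Fin (n + 1)) := by
      rw [eq_sub_iff_add_eq]
      exact add_cpos a l
    have hbeq : b = l - ((cpos b l : ℕ) : Fin (n + 1)) := by
      rw [eq_sub_iff_add_eq]
      exact add_cpos b l
    rw [hcprl] at ha hb
    have hform : ∀ e : Fin (n + 1), cpos e l ≤ n + 1 - A →
        P.xMinEdge e = (P.v (l - ((cpos e l - 1 : ℕ) : Fin (n + 1)))).1 := by
      intro e hee
      have heeq : e = l - ((cpos e l : ℕ) : Fin (n + 1)) := by
        rw [eq_sub_iff_add_eq]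
        exact add_cpos e l
      rcases Nat.eq_zero_or_pos (cpos e l) with h0 | h1
      · have hel : l = e := cpos_eq_zero_iff.1 h0
        rw [h0, ← hel]
        simp only [Nat.zero_sub, Nat.cast_zero, sub_zero]
        unfold xMinEdge
        rw [← hl.1.1, min_self]
      · have hsucc : l - ((cpos e l - 1 : ℕ) : Fin (n + 1)) = e + 1 := by
          rw [← sub_eq_iff_eq_add, cast_sub_succ, show cpos e l - 1 + 1 = cpos e l by omega]
          exact heeq.symm
        have hstep := hBstep (cpos e l) h1 hee
        rw [← heeq] at hstep
        unfold xMinEdge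
        rw [hsucc]
        exact min_eq_right hstep
    rw [hform a ha, hform b hb]
    exact hBmono (cpos b l - 1) (by omega) (cpos a l - 1) (by omega)
  · -- top boundary
    intro a b ha hb hab
    rw [hcplr] at ha hb
    have hform : ∀ e : Fin (n + 1), cpos l e ≤ A →
        P.xMinEdge e = (P.v (l + ((cpos l e : ℕ) : Fin (n + 1)))).1 := by
      intro e hee
      have heeq : e = l + ((cpos l e : ℕ) : Fin (n + 1)) := (add_cpos l e).symm
      have hstep := hTstep (cpos l e) hee
      rw [← heeq] at hstep
      unfold xMinEdge
      rw [← heeq]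
      exact min_eq_left hstep
    rw [hform a ha, hform b hb]
    exact hTmono (cpos l b) hb (cpos l a) hab
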